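/- arXiv:2504.00480 — 5 statements merged into one kernel-verified Lean document; each statement's English description precedes it below -/
import Mathlib

section
/- For any length-scale ℓ > 0 and any r ∈ [-1/2, 1/2], the error between the univariate Matérn(1/2) kernel κ(r) = exp(-|r|/ℓ) and its 1-periodization satisfies |κ(r) - ∑_{n∈ℤ} exp(-|r+n|/ℓ)| = ∑_{n∈ℤ, n≠0} exp(-|r+n|/ℓ) ≤ exp(-1/(2ℓ))·(1+2ℓ). -/
open Real

theorem matern1d_periodization_error (ℓ : ℝ) (hℓ : 0 < ℓ) (r : ℝ)
    (hr : r ∈ Set.Icc (-(1:ℝ)/2) (1/2)) :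
    |Real.exp (-|r|/ℓ) - ∑' n : ℤ, Real.exp (-|r + (n:ℝ)|/ℓ)|
      = ∑' n : {n : ℤ // n ≠ 0}, Real.exp (-|r + ((n : ℤ) : ℝ)|/ℓ) ∧
    ∑' n : {n : ℤ // n ≠ 0}, Real.exp (-|r + ((n : ℤ) : ℝ)|/ℓ)
      ≤ Real.exp (-1/(2*ℓ)) * (1 + 2*ℓ) := by
  obtain ⟨hr1, hr2⟩ := hr
  set f : ℤ → ℝ := fun n => Real.exp (-|r + (n:ℝ)|/ℓ) with hfdef
  set q : ℝ := Real.exp (-1/ℓ) with hqdef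
  have hq0 : 0 < q := Real.exp_pos _
  have hq1 : q < 1 := by
    rw [hqdef, Real.exp_lt_one_iff, neg_div]
    have : (0:ℝ) < 1/ℓ := by positivity
    linarith
  set A : ℝ := Real.exp (-(1+r)/ℓ) with hAdef
  set B : ℝ := Real.exp (-(1-r)/ℓ) with hBdef
  set F : ℤ → ℝ := fun n => if n = 0 then 0 else f n with hFdef
  -- positive part
  have hpos : HasSum (fun k : ℕ => F (k+1)) (A * (1-q)⁻¹) := by
    have : (fun k : ℕ => F (k+1)) = fun k : ℕ => A * q ^ k := by
      funext k
      have hne : ((k:ℤ)+1) ≠ 0 := by positivity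
      have habs : |r + (((k:ℤ)+1 : ℤ):ℝ)| = r + (k+1) := by
        rw [abs_of_nonneg]
        · push_cast; ring
        · push_cast
          have : (0:ℝ) ≤ (k:ℝ) := Nat.cast_nonneg k
          linarith
      simp only [hFdef, hfdef, hne, if_false, habs]
      rw [hAdef, hqdef, ← Real.exp_nat_mul, ← Real.exp_add]
      congr 1
      field_simp
      ring
    rw [this]
    exact (hasSum_geometric_of_lt_one hq0.le hq1).mul_left A
  have hposF : HasSum (fun k : ℕ => F k) (A * (1-q)⁻¹) := by
    have h0 : F ((0:ℕ):ℤ) = 0 := by simp [hFdef]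
    have h'' : HasSum (fun k : ℕ => F (((k+1:ℕ):ℤ))) (A * (1-q)⁻¹) := by
      convert hpos using 2 with k
      exact congrArg F (Nat.cast_succ k)
    have := (hasSum_nat_add_iff (f := fun k : ℕ => F k) 1).mp h''
    simpa [hFdef] using this
  -- negative part
  have hneg : HasSum (fun k : ℕ => F (-((k:ℤ)+1))) (B * (1-q)⁻¹) := by
    have : (fun k : ℕ => F (-((k:ℤ)+1))) = fun k : ℕ => B * q ^ k := by
      funext k
      have hne : (-((k:ℤ)+1)) ≠ 0 := by
        have : (0:ℤ) < (k:ℤ)+1 := by positivity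
        omega
      have habs : |r + ((-((k:ℤ)+1) : ℤ):ℝ)| = (k+1) - r := by
        rw [show (r + ((-((k:ℤ)+1) : ℤ):ℝ)) = -((((k:ℕ)):ℝ)+1 - r) by push_cast; ring,
          abs_neg, abs_of_nonneg]
        have : (0:ℝ) ≤ (k:ℝ) := Nat.cast_nonneg k
        linarith
      simp only [hFdef, hne, if_false, hfdef, habs]
      rw [hBdef, hqdef, ← Real.exp_nat_mul, ← Real.exp_add]
      congr 1
      field_simp
      ring
    rw [this]
    exact (hasSum_geometric_of_lt_one hq0.le hq1).mul_left B
  have hFsum : HasSum F (A * (1-q)⁻¹ + B * (1-q)⁻¹) :=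
    HasSum.of_nat_of_neg_add_one hposF hneg
  set T : ℝ := A * (1-q)⁻¹ + B * (1-q)⁻¹ with hTdef
  have hqlt : 0 < 1 - q := by linarith
  have hA0 : 0 < A := Real.exp_pos _
  have hB0 : 0 < B := Real.exp_pos _
  have hT0 : 0 ≤ T := by positivity
  -- relate subtype tsum to tsum of F
  have hsub : (∑' n : {n : ℤ // n ≠ 0}, f n) = T := by
    have h1 : (∑' n : {n : ℤ // n ≠ 0}, f n) = ∑' n : ℤ, Set.indicator {n : ℤ | n ≠ 0} f n :=
      tsum_subtype {n : ℤ | n ≠ 0} f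
    have h2 : Set.indicator {n : ℤ | n ≠ 0} f = F := by
      funext n
      by_cases h : n = 0 <;> simp [Set.indicator, hFdef, h]
    rw [h1, h2, hFsum.tsum_eq]
  -- summability of f and value of full tsum
  have hG : Summable (fun n : ℤ => if n = 0 then f 0 else 0) := by
    apply summable_of_ne_finset_zero (s := {0})
    intro b hb
    simp only [Finset.mem_singleton] at hb
    simp [hb]
  have hfF : f = fun n => F n + (if n = 0 then f 0 else 0) := by
    funext n
    by_cases h : n = 0 <;> simp [hFdef, h]
  have hfsummable : Summable f := by
    rw [hfF]; exact hFsum.summable.add hG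
  have htot : (∑' n : ℤ, f n) = T + f 0 := by
    conv_lhs => rw [hfF]
    rw [Summable.tsum_add hFsum.summable hG, hFsum.tsum_eq, tsum_eq_single 0 (by intro b hb; simp [hb])]
    simp
  have hf0 : f 0 = Real.exp (-|r|/ℓ) := by simp [hfdef]
  constructor
  · rw [htot, ← hf0, hsub]
    rw [show f 0 - (T + f 0) = -T by ring, abs_neg, abs_of_nonneg hT0]
  · rw [hsub]
    set c : ℝ := Real.exp (-1/(2*ℓ)) with hcdef
    have hc0 : 0 < c := Real.exp_pos _
    -- A + B ≤ c * (1 + q)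
    have hAB : A + B ≤ c * (1 + q) := by
      have hcosh : Real.cosh (r/ℓ) ≤ Real.cosh (1/(2*ℓ)) := by
        rw [Real.cosh_le_cosh]
        rw [abs_div, abs_of_pos hℓ, abs_of_pos (by positivity : (0:ℝ) < 1/(2*ℓ))]
        rw [div_le_iff₀ hℓ]
        have hrabs : |r| ≤ 1/2 := abs_le.mpr ⟨by linarith, by linarith⟩
        calc |r| ≤ 1/2 := hrabs
          _ = 1/(2*ℓ) * ℓ := by field_simp
      have hch1 : Real.exp (r/ℓ) + Real.exp (-(r/ℓ)) ≤
          Real.exp (1/(2*ℓ)) + Real.exp (-(1/(2*ℓ))) := by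
        have := hcosh
        rw [Real.cosh_eq, Real.cosh_eq] at this
        linarith
      have hAeq : A = q * Real.exp (-(r/ℓ)) := by
        rw [hAdef, hqdef, ← Real.exp_add]; congr 1; field_simp; ring
      have hBeq : B = q * Real.exp (r/ℓ) := by
        rw [hBdef, hqdef, ← Real.exp_add]; congr 1; field_simp; ring
      have hq_exp : q * Real.exp (1/(2*ℓ)) = c := by
        rw [hqdef, hcdef, ← Real.exp_add]; congr 1; field_simp; ring
      have hq_exp2 : q * Real.exp (-(1/(2*ℓ))) = c * q := by
        rw [hqdef, hcdef, ← Real.exp_add, mul_comm, ← Real.exp_add]; congr 1; field_simp; ring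
      calc A + B = q * (Real.exp (r/ℓ) + Real.exp (-(r/ℓ))) := by
            rw [hAeq, hBeq]; ring
        _ ≤ q * (Real.exp (1/(2*ℓ)) + Real.exp (-(1/(2*ℓ)))) := by
            apply mul_le_mul_of_nonneg_left hch1 hq0.le
        _ = c * (1 + q) := by rw [mul_add, hq_exp, hq_exp2]; ring
    -- q * (1 + ℓ) ≤ ℓ
    have hkey : q * (1 + ℓ) ≤ ℓ := by
      have hE : (1:ℝ) + 1/ℓ ≤ Real.exp (1/ℓ) := by
        have := Real.add_one_le_exp (1/ℓ); linarith
      have hqE : q * Real.exp (1/ℓ) = 1 := by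
        rw [hqdef, ← Real.exp_add]; simp [neg_div]
      have hE0 : 0 < Real.exp (1/ℓ) := Real.exp_pos _
      have h1 : q * (1 + 1/ℓ) ≤ q * Real.exp (1/ℓ) :=
        mul_le_mul_of_nonneg_left hE hq0.le
      rw [hqE] at h1
      have h2 : q * (1 + 1/ℓ) * ℓ ≤ 1 * ℓ := mul_le_mul_of_nonneg_right h1 hℓ.le
      have hinv : (1/ℓ) * ℓ = 1 := by field_simp
      nlinarith [h2, hinv, hq0]
    rw [hTdef]
    rw [show A * (1-q)⁻¹ + B * (1-q)⁻¹ = (A + B) / (1-q) by field_simp]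
    rw [div_le_iff₀ hqlt]
    nlinarith [hAB, hkey, hc0, hq0]
end

section
/- For ℓ > 0 and any point r ∈ [-1/2,1/2)³, the difference between the trivariate Matérn(1/2) kernel κ(r) = exp(-‖r‖₂/ℓ) and its 1-periodization κ̃(r) = ∑_{n∈ℤ³} exp(-‖r+n‖₂/ℓ) satisfies |κ(r) - κ̃(r)| ≤ δ(ℓ), where δ(ℓ) = 3e^{-1/(2√3 ℓ)}(1+2√3 ℓ) + 3e^{-1/(√3 ℓ)}(1+2√3 ℓ)² + e^{-3/(2√3 ℓ)}(1+2√3 ℓ)³. -/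
open Real

lemma geom_tail_aux {q : ℝ} (hq0 : 0 ≤ q) (hq1 : q < 1) (w : Finset ℕ) (h0 : 0 ∉ w) :
    ∑ n ∈ w, q ^ n ≤ q / (1 - q) := by
  have hsum : Summable fun n : ℕ => q ^ n := summable_geometric_of_lt_one hq0 hq1
  have h1 : (1:ℝ) + ∑ n ∈ w, q ^ n ≤ (1 - q)⁻¹ := by
    have h := Summable.sum_le_tsum (insert 0 w) (fun n _ => pow_nonneg hq0 n) hsum
    rwa [Finset.sum_insert h0, pow_zero, tsum_geometric_of_lt_one hq0 hq1] at h
  have h2 : (0:ℝ) < 1 - q := by linarith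
  have h3 : q / (1 - q) = (1 - q)⁻¹ - 1 := by field_simp; ring
  linarith

lemma onedim_tail {a x : ℝ} (ha : 0 < a) (hx1 : -(1:ℝ)/2 ≤ x) (hx2 : x < 1/2)
    (u : Finset ℤ) (h0 : (0:ℤ) ∉ u) :
    ∑ k ∈ u, Real.exp (-a * |x + k|) ≤ Real.exp (-a/2) * (1 + 2/a) := by
  classical
  set q : ℝ := Real.exp (-a) with hq_def
  have hq0 : 0 < q := Real.exp_pos _
  have hq1 : q < 1 := Real.exp_lt_one_iff.mpr (by linarith)
  have h1q : (0:ℝ) < 1 - q := by linarith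
  -- split into positive and negative parts
  have hsplit : ∑ k ∈ u, Real.exp (-a * |x + k|)
      = (∑ k ∈ u.filter (fun k => 0 < k), Real.exp (-a * |x + k|))
        + ∑ k ∈ u.filter (fun k => k < 0), Real.exp (-a * |x + k|) := by
    rw [← Finset.sum_filter_add_sum_filter_not u (fun k => 0 < k)]
    congr 1
    apply Finset.sum_congr _ (fun _ _ => rfl)
    ext k
    simp only [Finset.mem_filter]
    constructor
    · rintro ⟨hk, hk2⟩
      have : k ≠ 0 := fun h => h0 (h ▸ hk)
      exact ⟨hk, by omega⟩
    · rintro ⟨hk, hk2⟩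
      exact ⟨hk, by omega⟩
  -- positive part
  have hpos : ∑ k ∈ u.filter (fun k => 0 < k), Real.exp (-a * |x + k|)
      ≤ Real.exp (-a * x) * (q / (1 - q)) := by
    have heq : ∀ k ∈ u.filter (fun k => 0 < k),
        Real.exp (-a * |x + k|) = Real.exp (-a * x) * q ^ k.toNat := by
      intro k hk
      have hk1 : 1 ≤ k := (Finset.mem_filter.mp hk).2
      have hxk : 0 ≤ x + (k:ℝ) := by
        have : (1:ℝ) ≤ (k:ℝ) := by exact_mod_cast hk1
        linarith
      rw [abs_of_nonneg hxk]
      have hk' : ((k.toNat : ℕ) : ℝ) = (k:ℝ) := by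
        exact_mod_cast Int.toNat_of_nonneg (by omega)
      rw [hq_def, ← Real.exp_nat_mul, ← Real.exp_add]
      congr 1
      rw [hk']
      ring
    rw [Finset.sum_congr rfl heq, ← Finset.mul_sum]
    apply mul_le_mul_of_nonneg_left _ (Real.exp_pos _).le
    have h_inj : ∀ x ∈ u.filter (fun k => 0 < k), ∀ y ∈ u.filter (fun k => 0 < k),
        Int.toNat x = Int.toNat y → x = y := by
      intro x hx y hy hxy
      have := (Finset.mem_filter.mp hx).2
      have := (Finset.mem_filter.mp hy).2
      omega
    have himg := Finset.sum_image (f := fun n : ℕ => q ^ n) h_inj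
    rw [← himg]
    apply geom_tail_aux hq0.le hq1
    simp only [Finset.mem_image, Finset.mem_filter]
    rintro ⟨k, ⟨-, hk⟩, hk0⟩
    omega
  -- negative part
  have hneg : ∑ k ∈ u.filter (fun k => k < 0), Real.exp (-a * |x + k|)
      ≤ Real.exp (a * x) * (q / (1 - q)) := by
    have heq : ∀ k ∈ u.filter (fun k => k < 0),
        Real.exp (-a * |x + k|) = Real.exp (a * x) * q ^ (-k).toNat := by
      intro k hk
      have hk1 : k ≤ -1 := by have := (Finset.mem_filter.mp hk).2; omega
      have hxk : x + (k:ℝ) ≤ 0 := by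
        have : (k:ℝ) ≤ -1 := by exact_mod_cast hk1
        linarith
      rw [abs_of_nonpos hxk]
      have hk' : (((-k).toNat : ℕ) : ℝ) = -(k:ℝ) := by
        have h := Int.toNat_of_nonneg (a := -k) (by omega)
        exact_mod_cast congrArg (Int.cast : ℤ → ℝ) h
      rw [hq_def, ← Real.exp_nat_mul, ← Real.exp_add]
      congr 1
      rw [hk']
      ring
    rw [Finset.sum_congr rfl heq, ← Finset.mul_sum]
    apply mul_le_mul_of_nonneg_left _ (Real.exp_pos _).le
    have h_inj : ∀ x ∈ u.filter (fun k => k < 0), ∀ y ∈ u.filter (fun k => k < 0),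
        (fun k : ℤ => (-k).toNat) x = (fun k : ℤ => (-k).toNat) y → x = y := by
      intro x hx y hy hxy
      have := (Finset.mem_filter.mp hx).2
      have := (Finset.mem_filter.mp hy).2
      simp only at hxy
      omega
    have himg := Finset.sum_image (f := fun n : ℕ => q ^ n) h_inj
    rw [← himg]
    apply geom_tail_aux hq0.le hq1
    simp only [Finset.mem_image, Finset.mem_filter]
    rintro ⟨k, ⟨-, hk⟩, hk0⟩
    omega
  -- cosh bound
  set c : ℝ := Real.exp (a/2) with hc_def
  set e : ℝ := Real.exp (-a/2) with he_def
  have hcpos : 0 < c := Real.exp_pos _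
  have hepos : 0 < e := Real.exp_pos _
  have hce : c * e = 1 := by rw [hc_def, he_def, ← Real.exp_add]; ring_nf; exact Real.exp_zero
  have hcosh : Real.exp (-a * x) + Real.exp (a * x) ≤ c + e := by
    set u' : ℝ := Real.exp (a * x) with hu_def
    set v' : ℝ := Real.exp (-a * x) with hv_def
    have huv : u' * v' = 1 := by rw [hu_def, hv_def, ← Real.exp_add]; ring_nf; exact Real.exp_zero
    have hu_le : u' ≤ c := Real.exp_le_exp.mpr (by nlinarith)
    have hv_le : v' ≤ c := Real.exp_le_exp.mpr (by nlinarith)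
    have h1 : 0 ≤ (c - u') * (c - v') := mul_nonneg (by linarith) (by linarith)
    have hupos : 0 < u' := Real.exp_pos _
    have hvpos : 0 < v' := Real.exp_pos _
    nlinarith [mul_pos hcpos (mul_pos hupos hvpos)]
  -- final algebraic bound
  have hqe : e * e = q := by rw [he_def, hq_def, ← Real.exp_add]; ring_nf
  have hkey : (a + 1) * q ≤ 1 := by
    have h1 : a + 1 ≤ Real.exp a := Real.add_one_le_exp a
    have h2 : Real.exp a * q = 1 := by rw [hq_def, ← Real.exp_add]; ring_nf; exact Real.exp_zero
    nlinarith
  have hfinal : (c + e) * (q / (1 - q)) ≤ e * (1 + 2/a) := by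
    rw [mul_div_assoc' , div_le_iff₀ h1q]
    have h2 : e * (1 + 2/a) * (1 - q) = e * (a + 2) * (1 - q) / a := by field_simp
    rw [h2, le_div_iff₀ ha]
    nlinarith [mul_le_mul_of_nonneg_right hkey hepos.le]
  calc ∑ k ∈ u, Real.exp (-a * |x + k|)
      = _ + _ := hsplit
    _ ≤ Real.exp (-a * x) * (q / (1 - q)) + Real.exp (a * x) * (q / (1 - q)) :=
        add_le_add hpos hneg
    _ = (Real.exp (-a * x) + Real.exp (a * x)) * (q / (1 - q)) := by ring
    _ ≤ (c + e) * (q / (1 - q)) := by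
        apply mul_le_mul_of_nonneg_right hcosh
        positivity
    _ ≤ e * (1 + 2/a) := hfinal

set_option maxHeartbeats 1600000 in
theorem matern3d_periodization_error (ℓ : ℝ) (hℓ : 0 < ℓ)
    (r : EuclideanSpace ℝ (Fin 3)) (hr : ∀ j, r j ∈ Set.Ico (-(1:ℝ)/2) (1/2)) :
    |Real.exp (-‖r‖/ℓ) -
        ∑' n : Fin 3 → ℤ,
          Real.exp (-‖(show EuclideanSpace ℝ (Fin 3) from WithLp.toLp 2 (fun i => r i + (n i : ℝ)))‖/ℓ)|
      ≤ 3 * Real.exp (-1/(2*Real.sqrt 3*ℓ)) * (1 + 2*Real.sqrt 3*ℓ)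
        + 3 * Real.exp (-1/(Real.sqrt 3*ℓ)) * (1 + 2*Real.sqrt 3*ℓ)^2
        + Real.exp (-3/(2*Real.sqrt 3*ℓ)) * (1 + 2*Real.sqrt 3*ℓ)^3 := by
  classical
  have h3 : (0:ℝ) < Real.sqrt 3 := Real.sqrt_pos.mpr (by norm_num)
  set a : ℝ := 1 / (Real.sqrt 3 * ℓ) with ha_def
  have ha : 0 < a := by positivity
  set S : ℝ := Real.exp (-a/2) * (1 + 2/a) with hS_def
  have hS : 0 ≤ S := by positivity
  set f : Fin 3 → ℤ → ℝ := fun i k => Real.exp (-a * |r i + (k:ℝ)|) with hf_def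
  have hfpos : ∀ i k, 0 < f i k := fun i k => Real.exp_pos _
  have hf0le : ∀ i, f i 0 ≤ 1 := by
    intro i
    rw [hf_def]
    simp only [Int.cast_zero, add_zero]
    rw [Real.exp_le_one_iff]
    have : 0 ≤ |r i| := abs_nonneg _
    nlinarith
  have htail : ∀ i (u : Finset ℤ), (0:ℤ) ∉ u → ∑ k ∈ u, f i k ≤ S := by
    intro i u h0
    exact onedim_tail ha (hr i).1 (hr i).2 u h0
  have hsum_t : ∀ i (t : Finset ℤ), ∑ k ∈ t, f i k ≤ f i 0 + S := by
    intro i t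
    by_cases h0 : (0:ℤ) ∈ t
    · rw [← Finset.add_sum_erase t _ h0]
      exact add_le_add le_rfl (htail i _ (Finset.notMem_erase _ _))
    · calc ∑ k ∈ t, f i k ≤ S := htail i t h0
        _ ≤ f i 0 + S := le_add_of_nonneg_left (hfpos i 0).le
  -- domination by product
  have hdom : ∀ n : Fin 3 → ℤ,
      Real.exp (-‖(show EuclideanSpace ℝ (Fin 3) from WithLp.toLp 2 (fun i => r i + (n i : ℝ)))‖/ℓ)
        ≤ ∏ i, f i (n i) := by
    intro n
    set v : EuclideanSpace ℝ (Fin 3) := WithLp.toLp 2 (fun i => r i + (n i : ℝ)) with hv_def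
    have hnorm : ∑ i, |v i| ≤ Real.sqrt 3 * ‖v‖ := by
      have h1 : (∑ i, |v i|)^2 ≤ 3 * ∑ i, (v i)^2 := by
        have h := sq_sum_le_card_mul_sum_sq (s := (Finset.univ : Finset (Fin 3))) (f := fun i => |v i|)
        simpa [sq_abs] using h
      have h2 : ‖v‖ = Real.sqrt (∑ i, (v i)^2) := by
        rw [EuclideanSpace.norm_eq]
        congr 1
        apply Finset.sum_congr rfl
        intro i _
        rw [Real.norm_eq_abs, sq_abs]
      calc ∑ i, |v i| = Real.sqrt ((∑ i, |v i|)^2) := (Real.sqrt_sq (by positivity)).symm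
        _ ≤ Real.sqrt (3 * ∑ i, (v i)^2) := Real.sqrt_le_sqrt h1
        _ = Real.sqrt 3 * Real.sqrt (∑ i, (v i)^2) := Real.sqrt_mul (by norm_num) _
        _ = Real.sqrt 3 * ‖v‖ := by rw [h2]
    have hexp : -‖v‖/ℓ ≤ ∑ i, (-a * |v i|) := by
      have hsum_eq : ∑ i, (-a * |v i|) = -(a * ∑ i, |v i|) := by
        rw [Finset.mul_sum]
        simp [neg_mul]
      rw [hsum_eq]
      have hmul := mul_le_mul_of_nonneg_left hnorm ha.le
      have heq : a * (Real.sqrt 3 * ‖v‖) = ‖v‖/ℓ := by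
        rw [ha_def]
        field_simp
      have h5 : a * ∑ i, |v i| ≤ ‖v‖/ℓ := by linarith
      rw [neg_div]
      linarith
    calc Real.exp (-‖v‖/ℓ) ≤ Real.exp (∑ i, (-a * |v i|)) := Real.exp_le_exp.mpr hexp
      _ = ∏ i, Real.exp (-a * |v i|) := Real.exp_sum _ _
      _ = ∏ i, f i (n i) := rfl
  -- main finset bound for sums avoiding 0
  have hmain : ∀ s : Finset (Fin 3 → ℤ), (0 : Fin 3 → ℤ) ∉ s →
      ∑ n ∈ s, ∏ i, f i (n i) ≤ (∏ i, (f i 0 + S)) - ∏ i, f i 0 := by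
    intro s hs0
    set t : Fin 3 → Finset ℤ := fun i => insert 0 (s.image (fun n => n i)) with ht_def
    have hsub : s ⊆ (Fintype.piFinset t).erase 0 := by
      intro n hn
      refine Finset.mem_erase.mpr ⟨fun h => hs0 (h ▸ hn), ?_⟩
      rw [Fintype.mem_piFinset]
      intro i
      exact Finset.mem_insert_of_mem (Finset.mem_image_of_mem _ hn)
    have h0mem : (0 : Fin 3 → ℤ) ∈ Fintype.piFinset t := by
      rw [Fintype.mem_piFinset]
      intro i
      exact Finset.mem_insert_self _ _
    calc ∑ n ∈ s, ∏ i, f i (n i)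
        ≤ ∑ n ∈ (Fintype.piFinset t).erase 0, ∏ i, f i (n i) :=
          Finset.sum_le_sum_of_subset_of_nonneg hsub
            (fun n _ _ => Finset.prod_nonneg fun i _ => (hfpos i _).le)
      _ = (∑ n ∈ Fintype.piFinset t, ∏ i, f i (n i)) - ∏ i, f i 0 := by
          rw [← Finset.add_sum_erase _ _ h0mem]
          simp
      _ = (∏ i, ∑ k ∈ t i, f i k) - ∏ i, f i 0 := by rw [← Finset.prod_univ_sum]
      _ ≤ (∏ i, (f i 0 + S)) - ∏ i, f i 0 := by
          have hle : (∏ i, ∑ k ∈ t i, f i k) ≤ ∏ i, (f i 0 + S) :=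
            Finset.prod_le_prod
              (fun i _ => Finset.sum_nonneg fun k _ => (hfpos i k).le)
              (fun i _ => hsum_t i (t i))
          linarith
  have hprod_bound : (∏ i, (f i 0 + S)) - ∏ i, f i 0 ≤ 3*S + 3*S^2 + S^3 := by
    rw [Fin.prod_univ_three, Fin.prod_univ_three]
    have hu := (hfpos 0 0).le
    have hv := (hfpos 1 0).le
    have hw := (hfpos 2 0).le
    have hu1 := hf0le 0
    have hv1 := hf0le 1
    have hw1 := hf0le 2
    have huv : f 0 0 * f 1 0 ≤ 1 := mul_le_one₀ hu1 hv hv1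
    have huw : f 0 0 * f 2 0 ≤ 1 := mul_le_one₀ hu1 hw hw1
    have hvw : f 1 0 * f 2 0 ≤ 1 := mul_le_one₀ hv1 hw hw1
    have hS2 : 0 ≤ S^2 := sq_nonneg S
    nlinarith [mul_le_mul_of_nonneg_left huv hS, mul_le_mul_of_nonneg_left huw hS,
      mul_le_mul_of_nonneg_left hvw hS, mul_le_mul_of_nonneg_left hu1 hS2,
      mul_le_mul_of_nonneg_left hv1 hS2, mul_le_mul_of_nonneg_left hw1 hS2]
  -- summability
  set g : (Fin 3 → ℤ) → ℝ := fun n =>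
    Real.exp (-‖(show EuclideanSpace ℝ (Fin 3) from WithLp.toLp 2 (fun i => r i + (n i : ℝ)))‖/ℓ) with hg_def
  have hgpos : ∀ n, 0 < g n := fun n => Real.exp_pos _
  have hgsummable : Summable g := by
    apply summable_of_sum_le (c := ∏ i, (f i 0 + S)) (fun n => (hgpos n).le)
    intro s
    calc ∑ n ∈ s, g n ≤ ∑ n ∈ s, ∏ i, f i (n i) := Finset.sum_le_sum fun n _ => hdom n
      _ ≤ ∏ i, ∑ k ∈ (insert 0 (s.image (fun n => n i)) : Finset ℤ), f i k := by
          rw [Finset.prod_univ_sum]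
          apply Finset.sum_le_sum_of_subset_of_nonneg
          · intro n hn
            rw [Fintype.mem_piFinset]
            intro i
            exact Finset.mem_insert_of_mem (Finset.mem_image_of_mem _ hn)
          · exact fun n _ _ => Finset.prod_nonneg fun i _ => (hfpos i _).le
      _ ≤ ∏ i, (f i 0 + S) :=
          Finset.prod_le_prod
            (fun i _ => Finset.sum_nonneg fun k _ => (hfpos i k).le)
            (fun i _ => hsum_t i _)
  have hv0 : (show EuclideanSpace ℝ (Fin 3) from WithLp.toLp 2 (fun i => r i + (((0 : Fin 3 → ℤ) i : ℤ) : ℝ))) = r := by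
    ext i
    show r i + ((0:ℤ):ℝ) = r i
    simp
  have hg0 : g 0 = Real.exp (-‖r‖/ℓ) := by
    show Real.exp (-‖(show EuclideanSpace ℝ (Fin 3) from WithLp.toLp 2 (fun i => r i + (((0 : Fin 3 → ℤ) i : ℤ) : ℝ)))‖/ℓ) = _
    rw [hv0]
  have hle : g 0 ≤ ∑' n, g n := Summable.le_tsum hgsummable 0 (fun n _ => (hgpos n).le)
  have htsum_ite : ∑' n, (if n = (0 : Fin 3 → ℤ) then 0 else g n) ≤ 3*S + 3*S^2 + S^3 := by
    apply tsum_le_of_sum_le' (by positivity)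
    intro s
    calc ∑ n ∈ s, (if n = (0 : Fin 3 → ℤ) then 0 else g n)
        = ∑ n ∈ s.erase 0, (if n = (0 : Fin 3 → ℤ) then 0 else g n) :=
          (Finset.sum_erase _ (by simp)).symm
      _ = ∑ n ∈ s.erase 0, g n :=
          Finset.sum_congr rfl (fun n hn => if_neg (Finset.mem_erase.mp hn).1)
      _ ≤ ∑ n ∈ s.erase 0, ∏ i, f i (n i) := Finset.sum_le_sum fun n _ => hdom n
      _ ≤ _ := le_trans (hmain _ (Finset.notMem_erase _ _)) hprod_bound
  -- rewrite RHS
  have hb : 1 + 2*Real.sqrt 3*ℓ = 1 + 2/a := by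
    rw [ha_def]
    field_simp
  have he1 : Real.exp (-1/(2*Real.sqrt 3*ℓ)) = Real.exp (-a/2) := by
    congr 1
    rw [ha_def]
    field_simp
  have he2 : Real.exp (-1/(Real.sqrt 3*ℓ)) = Real.exp (-a/2)^2 := by
    have harg : -1/(Real.sqrt 3*ℓ) = (-a/2) + (-a/2) := by
      rw [ha_def]; field_simp; ring
    rw [harg, Real.exp_add, sq]
  have he3 : Real.exp (-3/(2*Real.sqrt 3*ℓ)) = Real.exp (-a/2)^3 := by
    have harg : -3/(2*Real.sqrt 3*ℓ) = ((-a/2) + (-a/2)) + (-a/2) := by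
      rw [ha_def]; field_simp; ring
    rw [harg, Real.exp_add, Real.exp_add]
    ring
  rw [hb, he1, he2, he3]
  have hrhs : 3 * Real.exp (-a/2) * (1 + 2/a)
        + 3 * Real.exp (-a/2)^2 * (1 + 2/a)^2
        + Real.exp (-a/2)^3 * (1 + 2/a)^3 = 3*S + 3*S^2 + S^3 := by
    rw [hS_def]; ring
  rw [hrhs]
  rw [abs_sub_comm, abs_of_nonneg (sub_nonneg.mpr (hg0 ▸ hle))]
  rw [Summable.tsum_eq_add_tsum_ite hgsummable 0, ← hg0]
  simp only [add_sub_cancel_left]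
  exact htsum_ite
end

section
/- For ℓ with 0 < ℓ < 1/2 and any r ∈ [-1/2,1/2], ∑_{n∈ℤ, n≠0} (|r+n|/ℓ²)·exp(-|r+n|/ℓ) ≤ e^{-1/(2ℓ)}(1+2ℓ+4ℓ²)/(2ℓ²). -/
open Real

lemma expdec {ℓ x y : ℝ} (hℓ : 0 < ℓ) (hx : ℓ ≤ x) (hxy : x ≤ y) :
    y * Real.exp (-y/ℓ) ≤ x * Real.exp (-x/ℓ) := by
  have hx0 : 0 < x := hℓ.trans_le hx
  have h1 : (y-x)/ℓ + 1 ≤ Real.exp ((y-x)/ℓ) := Real.add_one_le_exp _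
  have h2 : (y - x) ≤ x * ((y-x)/ℓ) := by
    rw [mul_div_assoc', le_div_iff₀ hℓ]; nlinarith
  have key : y ≤ x * Real.exp ((y-x)/ℓ) := by nlinarith [Real.exp_pos ((y-x)/ℓ)]
  calc y * Real.exp (-y/ℓ) ≤ (x * Real.exp ((y-x)/ℓ)) * Real.exp (-y/ℓ) :=
        mul_le_mul_of_nonneg_right key (Real.exp_pos _).le
    _ = x * Real.exp (-x/ℓ) := by
        rw [mul_assoc, ← Real.exp_add]
        congr 2
        field_simp
        ring

lemma hasSum_shift (ℓ c : ℝ) (hℓ : 0 < ℓ) :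
    HasSum (fun k : ℕ => (((k:ℝ)+c)/ℓ^2) * Real.exp (-((k:ℝ)+c)/ℓ))
      ((Real.exp (-c/ℓ)/ℓ^2) *
        (Real.exp (-1/ℓ)/(1-Real.exp (-1/ℓ))^2 + c/(1-Real.exp (-1/ℓ)))) := by
  set q := Real.exp (-1/ℓ) with hqdef
  have hq0 : 0 < q := Real.exp_pos _
  have hq1 : q < 1 := Real.exp_lt_one_iff.mpr (div_neg_of_neg_of_pos (by norm_num) hℓ)
  have h1 : HasSum (fun k : ℕ => (k:ℝ) * q ^ k) (q / (1-q)^2) := by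
    have := hasSum_coe_mul_geometric_of_norm_lt_one (𝕜 := ℝ) (r := q)
      (by rw [Real.norm_eq_abs, abs_of_pos hq0]; exact hq1)
    exact this
  have h2 : HasSum (fun k : ℕ => c * q ^ k) (c * (1-q)⁻¹) :=
    (hasSum_geometric_of_lt_one hq0.le hq1).mul_left c
  have h3 := (h1.add h2).mul_left (Real.exp (-c/ℓ)/ℓ^2)
  convert h3 using 2 with k
  case e'_3 => rfl
  case e'_6 => rw [div_eq_mul_inv c]
  have hek : Real.exp (-((k:ℝ)+c)/ℓ) = q ^ k * Real.exp (-c/ℓ) := by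
    rw [hqdef, ← Real.exp_nat_mul, ← Real.exp_add]
    congr 1
    field_simp
    ring
  rw [hek]; ring

private noncomputable def gmaj (ℓ : ℝ) : ℤ → ℝ := fun n =>
  if 0 < n then (((n:ℤ):ℝ)/ℓ^2) * Real.exp (-((n:ℤ):ℝ)/ℓ)
  else if n = 0 then 0
  else ((-((n:ℤ):ℝ)-1/2)/ℓ^2) * Real.exp (-(-((n:ℤ):ℝ)-1/2)/ℓ)

set_option maxHeartbeats 1000000 in
lemma main_half (ℓ : ℝ) (hℓ : 0 < ℓ) (hℓ' : ℓ < 1/2)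
    (r : ℝ) (hr0 : 0 ≤ r) (hr1 : r ≤ 1/2) :
    ∑' n : {n : ℤ // n ≠ 0}, (|r + ((n : ℤ) : ℝ)|/ℓ^2) * Real.exp (-|r + ((n : ℤ) : ℝ)|/ℓ)
      ≤ Real.exp (-1/(2*ℓ)) * (1 + 2*ℓ + 4*ℓ^2) / (2*ℓ^2) := by
  have hℓ0 : ℓ ≠ 0 := ne_of_gt hℓ
  set a := Real.exp (-1/(2*ℓ)) with hadef
  set q := Real.exp (-1/ℓ) with hqdef
  have ha0 : 0 < a := Real.exp_pos _
  have ha1 : a < 1 := Real.exp_lt_one_iff.mpr (div_neg_of_neg_of_pos (by norm_num) (by positivity))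
  have hq0 : 0 < q := Real.exp_pos _
  have hq1 : q < 1 := Real.exp_lt_one_iff.mpr (div_neg_of_neg_of_pos (by norm_num) hℓ)
  have hqa : q = a * a := by
    rw [hadef, hqdef, ← Real.exp_add]; congr 1; field_simp; ring
  -- the two half sums
  have hS1 : HasSum (fun k : ℕ => gmaj ℓ ((k:ℤ) + 1))
      ((q/ℓ^2) * (q/(1-q)^2 + 1/(1-q))) := by
    have h := hasSum_shift ℓ 1 hℓ
    convert h using 2 with k
    have hk : (0:ℤ) < (k:ℤ) + 1 := by positivity
    simp only [gmaj, if_pos hk]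
    push_cast
    try ring_nf
  have hS2 : HasSum (fun k : ℕ => gmaj ℓ (-((k:ℤ) + 1)))
      ((a/ℓ^2) * (q/(1-q)^2 + (1/2)/(1-q))) := by
    have h := hasSum_shift ℓ (1/2) hℓ
    convert h using 2 with k
    · have hk1 : ¬ (0:ℤ) < -((k:ℤ) + 1) := by omega
      have hk2 : -((k:ℤ) + 1) ≠ 0 := by omega
      simp only [gmaj, if_neg hk1, if_neg hk2]
      push_cast
      try ring_nf
    · rw [show -(1/2)/ℓ = -1/(2*ℓ) by ring, hadef]
  have hg0 : gmaj ℓ 0 = 0 := by simp [gmaj]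
  have hG : HasSum (gmaj ℓ)
      ((q/ℓ^2) * (q/(1-q)^2 + 1/(1-q)) + 0 + (a/ℓ^2) * (q/(1-q)^2 + (1/2)/(1-q))) := by
    have := HasSum.of_add_one_of_neg_add_one hS1 hS2
    rwa [hg0] at this
  -- nonnegativity of the majorant
  have hgnn : ∀ n : ℤ, 0 ≤ gmaj ℓ n := by
    intro n
    unfold gmaj
    split_ifs with h1 h2
    · have : (0:ℝ) < ((n:ℤ):ℝ) := by exact_mod_cast h1
      positivity
    · exact le_rfl
    · have hn : n ≤ -1 := by omega
      have : ((n:ℤ):ℝ) ≤ -1 := by exact_mod_cast hn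
      have h3 : (0:ℝ) ≤ -((n:ℤ):ℝ) - 1/2 := by linarith
      exact mul_nonneg (div_nonneg h3 (by positivity)) (Real.exp_pos _).le
  -- termwise bound
  have hterm : ∀ i : {n : ℤ // n ≠ 0},
      (|r + ((i : ℤ) : ℝ)|/ℓ^2) * Real.exp (-|r + ((i : ℤ) : ℝ)|/ℓ) ≤ gmaj ℓ (i : ℤ) := by
    rintro ⟨n, hn⟩
    rcases lt_or_gt_of_ne hn with hneg | hpos
    · -- n < 0
      have hn1 : n ≤ -1 := by omega
      have hc : ((n:ℤ):ℝ) ≤ -1 := by exact_mod_cast hn1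
      have habs : |r + ((n:ℤ):ℝ)| = -r - ((n:ℤ):ℝ) := by
        rw [abs_of_nonpos (by linarith)]; ring
      have hk1 : ¬ (0:ℤ) < n := by omega
      simp only [gmaj, if_neg hk1, if_neg hn, habs]
      have hmono := expdec (x := -((n:ℤ):ℝ) - 1/2) (y := -r - ((n:ℤ):ℝ)) hℓ
        (by linarith) (by linarith)
      calc (-r - ((n:ℤ):ℝ))/ℓ^2 * Real.exp (-(-r - ((n:ℤ):ℝ))/ℓ)
          = (1/ℓ^2) * ((-r - ((n:ℤ):ℝ)) * Real.exp (-(-r - ((n:ℤ):ℝ))/ℓ)) := by ring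
        _ ≤ (1/ℓ^2) * ((-((n:ℤ):ℝ) - 1/2) * Real.exp (-(-((n:ℤ):ℝ) - 1/2)/ℓ)) := by
            apply mul_le_mul_of_nonneg_left hmono (by positivity)
        _ = (-((n:ℤ):ℝ)-1/2)/ℓ^2 * Real.exp (-(-((n:ℤ):ℝ)-1/2)/ℓ) := by ring
    · -- 0 < n
      have hn1 : 1 ≤ n := hpos
      have hc : (1:ℝ) ≤ ((n:ℤ):ℝ) := by exact_mod_cast hn1
      have habs : |r + ((n:ℤ):ℝ)| = r + ((n:ℤ):ℝ) := abs_of_nonneg (by linarith)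
      simp only [gmaj, if_pos hpos, habs]
      have hmono := expdec (x := ((n:ℤ):ℝ)) (y := r + ((n:ℤ):ℝ)) hℓ
        (by linarith) (by linarith)
      calc (r + ((n:ℤ):ℝ))/ℓ^2 * Real.exp (-(r + ((n:ℤ):ℝ))/ℓ)
          = (1/ℓ^2) * ((r + ((n:ℤ):ℝ)) * Real.exp (-(r + ((n:ℤ):ℝ))/ℓ)) := by ring
        _ ≤ (1/ℓ^2) * (((n:ℤ):ℝ) * Real.exp (-((n:ℤ):ℝ)/ℓ)) := by
            apply mul_le_mul_of_nonneg_left hmono (by positivity)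
        _ = ((n:ℤ):ℝ)/ℓ^2 * Real.exp (-((n:ℤ):ℝ)/ℓ) := by ring
  -- summability of the original series
  have hgsum : Summable (gmaj ℓ) := hG.summable
  have hFsum : Summable (fun i : {n : ℤ // n ≠ 0} =>
      (|r + ((i : ℤ) : ℝ)|/ℓ^2) * Real.exp (-|r + ((i : ℤ) : ℝ)|/ℓ)) := by
    apply Summable.of_nonneg_of_le (fun i => by positivity) hterm
    exact hgsum.comp_injective Subtype.val_injective
  -- compare
  have hle := Summable.tsum_le_tsum_of_inj (fun i : {n : ℤ // n ≠ 0} => (i : ℤ))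
    Subtype.val_injective (fun c _ => hgnn c) hterm hFsum hgsum
  rw [hG.tsum_eq] at hle
  refine hle.trans ?_
  -- final numeric inequality
  have hx : (0:ℝ) < 1/(2*ℓ) := by positivity
  clear_value a q
  have hB : 1 + 1/(2*ℓ) + (1/(2*ℓ))^2/2 ≤ Real.exp (1/(2*ℓ)) := by
    have h3 := Real.sum_le_exp_of_nonneg hx.le 3
    rw [Finset.sum_range_succ, Finset.sum_range_succ, Finset.sum_range_succ,
      Finset.sum_range_zero] at h3
    refine le_trans (le_of_eq ?_) h3
    norm_num [Nat.factorial]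
  have hea : a * Real.exp (1/(2*ℓ)) = 1 := by
    rw [hadef, ← Real.exp_add, show -1/(2*ℓ) + 1/(2*ℓ) = 0 by ring, Real.exp_zero]
  have ha2 : a * (8*ℓ^2 + 4*ℓ + 1) ≤ 8*ℓ^2 := by
    have hab : a * (1 + 1/(2*ℓ) + (1/(2*ℓ))^2/2) ≤ 1 := by
      calc a * (1 + 1/(2*ℓ) + (1/(2*ℓ))^2/2) ≤ a * Real.exp (1/(2*ℓ)) :=
            mul_le_mul_of_nonneg_left hB ha0.le
        _ = 1 := hea
    have hrw : a * (8*ℓ^2 + 4*ℓ + 1) = (8*ℓ^2) * (a * (1 + 1/(2*ℓ) + (1/(2*ℓ))^2/2)) := by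
      field_simp; ring
    rw [hrw]
    nlinarith
  have key : 1 ≤ (1-a)^2 * (1 + 2*ℓ + 4*ℓ^2) := by
    have h1 : (1+4*ℓ) ≤ (1-a) * (1+4*ℓ+8*ℓ^2) := by nlinarith
    have h2 : (1+4*ℓ)^2 ≤ ((1-a) * (1+4*ℓ+8*ℓ^2))^2 :=
      pow_le_pow_left₀ (by positivity) h1 2
    have hQ : (0:ℝ) < 1+2*ℓ+4*ℓ^2 := by positivity
    have hP : (0:ℝ) < 1+4*ℓ+8*ℓ^2 := by positivity
    nlinarith [mul_le_mul_of_nonneg_right h2 hQ.le, mul_pos hP hP]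
  have h1a : (1:ℝ) - a ≠ 0 := by nlinarith
  have h1q : (1:ℝ) - a*a ≠ 0 := by nlinarith
  have hid : (q/ℓ^2) * (q/(1-q)^2 + 1/(1-q)) + 0 + (a/ℓ^2) * (q/(1-q)^2 + (1/2)/(1-q))
      = a / (2*ℓ^2*(1-a)^2) := by
    rw [hqa]
    have h1p : (1:ℝ) - a^2 ≠ 0 := by nlinarith
    field_simp
    ring
  have h1a' : (0:ℝ) < 1 - a := by linarith
  rw [hid, div_le_div_iff₀ (mul_pos (by positivity) (pow_pos h1a' 2)) (by positivity)]
  nlinarith [mul_le_mul_of_nonneg_left key (show (0:ℝ) ≤ a*(2*ℓ^2) by positivity)]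

theorem derivative_matern1d_periodization_error (ℓ : ℝ) (hℓ : 0 < ℓ) (hℓ' : ℓ < 1/2)
    (r : ℝ) (hr : r ∈ Set.Icc (-(1:ℝ)/2) (1/2)) :
    ∑' n : {n : ℤ // n ≠ 0}, (|r + ((n : ℤ) : ℝ)|/ℓ^2) * Real.exp (-|r + ((n : ℤ) : ℝ)|/ℓ)
      ≤ Real.exp (-1/(2*ℓ)) * (1 + 2*ℓ + 4*ℓ^2) / (2*ℓ^2) := by
  obtain ⟨hrl, hru⟩ := hr
  rcases le_or_gt 0 r with h0 | h0
  · exact main_half ℓ hℓ hℓ' r h0 hru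
  · have hflip : ∑' n : {n : ℤ // n ≠ 0},
        (|r + ((n : ℤ) : ℝ)|/ℓ^2) * Real.exp (-|r + ((n : ℤ) : ℝ)|/ℓ)
        = ∑' n : {n : ℤ // n ≠ 0},
        (|(-r) + ((n : ℤ) : ℝ)|/ℓ^2) * Real.exp (-|(-r) + ((n : ℤ) : ℝ)|/ℓ) := by
      rw [← Equiv.tsum_eq
        (((Equiv.neg ℤ).subtypeEquiv (fun a => by simp)) : {n : ℤ // n ≠ 0} ≃ {n : ℤ // n ≠ 0})
        (fun m : {n : ℤ // n ≠ 0} =>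
        (|(-r) + ((m : ℤ) : ℝ)|/ℓ^2) * Real.exp (-|(-r) + ((m : ℤ) : ℝ)|/ℓ))]
      apply tsum_congr
      rintro ⟨n, hn⟩
      simp only [Equiv.subtypeEquiv_apply, Equiv.neg_apply]
      push_cast
      rw [show (-r) + -((n:ℤ):ℝ) = -(r + ((n:ℤ):ℝ)) by ring, abs_neg]
    rw [hflip]
    exact main_half ℓ hℓ hℓ' (-r) (by linarith) (by linarith)
end

section
/- Let m ∈ ℕ with m > 2√3. Then ∑_{k ∈ ℤ³, ‖k‖₂ ≥ m/2} ‖k‖₂^{-4} ≤ ∫_{{x ∈ ℝ³ : ‖x‖₂ ≥ m/2 - √3}} ‖x‖₂^{-4} dx = 8π/(m - 2√3). -/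
open Real MeasureTheory Set

noncomputable section LatticeAux

local notation "E3" => EuclideanSpace ℝ (Fin 3)

def latBox : Set (Fin 3 → ℝ) := Set.univ.pi fun _ => Set.Icc (-(1:ℝ)/2) (1/2)

lemma latBox_meas : MeasurableSet latBox := MeasurableSet.univ_pi fun _ => measurableSet_Icc

lemma latBox_compact : IsCompact latBox := isCompact_univ_pi fun _ => isCompact_Icc

lemma integral_Icc_one : ∫ t in Set.Icc (-(1:ℝ)/2) (1/2), (1:ℝ) = 1 := by
  rw [MeasureTheory.integral_Icc_eq_integral_Ioc,
    ← intervalIntegral.integral_of_le (by norm_num : -(1:ℝ)/2 ≤ 1/2)]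
  simp
  norm_num

lemma integral_Icc_id : ∫ t in Set.Icc (-(1:ℝ)/2) (1/2), t = 0 := by
  rw [MeasureTheory.integral_Icc_eq_integral_Ioc,
    ← intervalIntegral.integral_of_le (by norm_num : -(1:ℝ)/2 ≤ 1/2), integral_id]
  norm_num

lemma integral_Icc_sq : ∫ t in Set.Icc (-(1:ℝ)/2) (1/2), t * t = 1/12 := by
  have : ∀ t : ℝ, t * t = t ^ 2 := fun t => (sq t).symm
  simp_rw [this]
  rw [MeasureTheory.integral_Icc_eq_integral_Ioc,
    ← intervalIntegral.integral_of_le (by norm_num : -(1:ℝ)/2 ≤ 1/2), integral_pow]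
  norm_num

lemma latBox_integral_prod (f : Fin 3 → ℝ → ℝ) :
    ∫ y in latBox, ∏ i, f i (y i) = ∏ i, ∫ t in Set.Icc (-(1:ℝ)/2) (1/2), f i t := by
  have h1 : ∀ y : Fin 3 → ℝ, latBox.indicator (fun y => ∏ i, f i (y i)) y
      = ∏ i, (Set.Icc (-(1:ℝ)/2) (1/2)).indicator (f i) (y i) := by
    intro y
    by_cases hy : y ∈ latBox
    · rw [Set.indicator_of_mem hy]
      have hy' := Set.mem_pi.mp hy
      exact Finset.prod_congr rfl fun i _ =>
        (Set.indicator_of_mem (hy' i (Set.mem_univ i)) (f i)).symm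
    · rw [Set.indicator_of_notMem hy]
      simp only [latBox, Set.mem_pi, Set.mem_univ, forall_true_left] at hy
      push_neg at hy
      obtain ⟨i, hi⟩ := hy
      refine (Finset.prod_eq_zero (Finset.mem_univ i)
        (Set.indicator_of_notMem (by simpa using hi) (f i))).symm
  rw [← MeasureTheory.integral_indicator latBox_meas]
  calc ∫ y : Fin 3 → ℝ, latBox.indicator (fun y => ∏ i, f i (y i)) y
      = ∫ y : Fin 3 → ℝ, ∏ i, (Set.Icc (-(1:ℝ)/2) (1/2)).indicator (f i) (y i) := by
        simp_rw [h1]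
    _ = ∏ i, ∫ t, (Set.Icc (-(1:ℝ)/2) (1/2)).indicator (f i) t :=
        MeasureTheory.integral_fintype_prod_volume_eq_prod
          (fun i => (Set.Icc (-(1:ℝ)/2) (1/2)).indicator (f i))
    _ = ∏ i, ∫ t in Set.Icc (-(1:ℝ)/2) (1/2), f i t := by
        exact Finset.prod_congr rfl fun i _ =>
          MeasureTheory.integral_indicator measurableSet_Icc

lemma latBox_integral_mul (i j : Fin 3) :
    ∫ y in latBox, y i * y j = if i = j then (1/12:ℝ) else 0 := by
  have key : ∀ y : Fin 3 → ℝ,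
      y i * y j = ∏ l, ((if l = i then y l else 1) * (if l = j then y l else 1)) := by
    intro y
    rw [Finset.prod_mul_distrib, Finset.prod_ite_eq', Finset.prod_ite_eq']
    simp
  simp_rw [key]
  rw [latBox_integral_prod (fun l t => (if l = i then t else 1) * (if l = j then t else 1))]
  by_cases h : i = j
  · subst h
    have h2 : ∀ l : Fin 3, (∫ t in Set.Icc (-(1:ℝ)/2) (1/2),
        (if l = i then t else 1) * (if l = i then t else 1)) = if l = i then 1/12 else 1 := by
      intro l
      by_cases hl : l = i
      · simp only [hl, if_true]
        exact integral_Icc_sq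
      · simp only [hl, if_false, one_mul]
        exact integral_Icc_one
    simp_rw [h2]
    rw [Finset.prod_ite_eq']
    simp
  · rw [if_neg h]
    apply Finset.prod_eq_zero (Finset.mem_univ i)
    simp only [if_neg h, if_pos, mul_one]
    simpa using integral_Icc_id

end LatticeAux

section Alg

lemma alg_ineq {D w u : ℝ} (hD : 4 ≤ D) (hw0 : 0 ≤ w) (hw : w ≤ 3/4) (hu : u^2 ≤ 4*D*w) :
    2/D^2 - 4*w/D^3 + 6*u^2/(D+3/4)^4 ≤ 1/(D+w+u)^2 + 1/(D+w-u)^2 := by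
  set s : ℝ := D + w with hs_def
  have hD0 : (0:ℝ) < D := by linarith
  have hs0 : (0:ℝ) < s := by rw [hs_def]; linarith
  have husq : u^2 < s^2 := by nlinarith
  have habs : |u| < s := by
    by_contra hcon
    push_neg at hcon
    have h2 : s^2 ≤ u^2 := by nlinarith [sq_abs u, abs_nonneg u]
    linarith
  obtain ⟨hu1, hu2⟩ := abs_lt.mp habs
  have hsu1 : 0 < s + u := by linarith
  have hsu2 : 0 < s - u := by linarith
  have hdenpos : 0 < s^2 - u^2 := by nlinarith
  have hid : 1/(s+u)^2 + 1/(s-u)^2 = 2*(s^2+u^2)/((s^2-u^2))^2 := by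
    have e1 : s^2 - u^2 = (s+u)*(s-u) := by ring
    rw [e1]
    field_simp [hsu1.ne', hsu2.ne']
    ring
  have hden : (0:ℝ) < (s^2 - u^2)^2 := by positivity
  have step1 : 2*(s^2+3*u^2)/s^4 ≤ 2*(s^2+u^2)/((s^2-u^2))^2 := by
    rw [div_le_div_iff₀ (by positivity) hden]
    have h5 : 0 ≤ u^4*(5*s^2 - 3*u^2) := mul_nonneg (by positivity) (by nlinarith)
    nlinarith [h5]
  have key3 : (2*D - 4*w) * s^2 ≤ 2 * D^3 := by
    have e2 : 2*D^3 - (2*D - 4*w)*(D+w)^2 = 6*D*w^2 + 4*w^3 := by ring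
    have h6 : 0 ≤ 6*D*w^2 + 4*w^3 := by positivity
    rw [hs_def]
    linarith
  have step3 : 2/D^2 - 4*w/D^3 ≤ 2/s^2 := by
    have e3 : 2/D^2 - 4*w/D^3 = (2*D - 4*w)/D^3 := by
      field_simp
    rw [e3, div_le_div_iff₀ (by positivity) (by positivity)]
    calc (2*D - 4*w) * s^2 ≤ 2 * D^3 := key3
      _ = 2 * D^3 := rfl
  have hsle : s ≤ D + 3/4 := by rw [hs_def]; linarith
  have step4 : 6*u^2/(D+3/4)^4 ≤ 6*u^2/s^4 :=
    div_le_div_of_nonneg_left (by positivity) (by positivity)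
      (pow_le_pow_left₀ hs0.le hsle 4)
  have heq2 : 2*(s^2+3*u^2)/s^4 = 2/s^2 + 6*u^2/s^4 := by
    field_simp
    ring
  calc 2/D^2 - 4*w/D^3 + 6*u^2/(D+3/4)^4
      ≤ 2/s^2 + 6*u^2/s^4 := by linarith
    _ = 2*(s^2+3*u^2)/s^4 := heq2.symm
    _ ≤ 2*(s^2+u^2)/((s^2-u^2))^2 := step1
    _ = 1/(s+u)^2 + 1/(s-u)^2 := hid.symm

lemma final_ineq {D : ℝ} (hD : 4 ≤ D) : 1/(2*D^3) ≤ D/(D+3/4)^4 := by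
  have hD0 : (0:ℝ) < D := by linarith
  have h1 : (D+3/4)^4 ≤ 2*D^4 := by
    nlinarith [mul_nonneg (sub_nonneg.mpr hD) (sq_nonneg D),
      mul_nonneg (mul_nonneg (sub_nonneg.mpr hD) (sub_nonneg.mpr hD)) (sq_nonneg D),
      mul_nonneg (sub_nonneg.mpr hD) (mul_nonneg (sub_nonneg.mpr hD) (sub_nonneg.mpr hD)),
      sq_nonneg (D-4), hD0.le]
  rw [div_le_div_iff₀ (by positivity) (by positivity)]
  nlinarith [pow_pos hD0 4, pow_pos hD0 3]

end Alg

section KeyCube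

lemma mem_latBox_iff {y : Fin 3 → ℝ} : y ∈ latBox ↔ ∀ i, |y i| ≤ 1/2 := by
  simp only [latBox, Set.mem_pi, Set.mem_univ, forall_true_left, Set.mem_Icc, abs_le, neg_div]

lemma neg_mem_latBox {y : Fin 3 → ℝ} (hy : y ∈ latBox) : -y ∈ latBox := by
  rw [mem_latBox_iff] at hy ⊢
  intro i
  simpa [abs_neg] using hy i

lemma sum_sq_latBox_le {y : Fin 3 → ℝ} (hy : y ∈ latBox) : ∑ i, (y i)^2 ≤ 3/4 := by
  rw [mem_latBox_iff] at hy
  have h : ∀ i, (y i)^2 ≤ 1/4 := by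
    intro i
    have := hy i
    nlinarith [abs_nonneg (y i), sq_abs (y i), this]
  rw [Fin.sum_univ_three]
  linarith [h 0, h 1, h 2]

lemma volume_latBox : volume latBox = 1 := by
  rw [latBox, volume_pi_pi]
  simp only [Real.volume_Icc]
  norm_num

lemma continuous_sumsq (c : Fin 3 → ℝ) : Continuous fun y : Fin 3 → ℝ => ∑ i, (c i + y i)^2 :=
  continuous_finset_sum _ fun i _ => (continuous_const.add (continuous_apply i)).pow 2

lemma continuous_sumsq0 : Continuous fun y : Fin 3 → ℝ => ∑ i, (y i)^2 :=
  continuous_finset_sum _ fun i _ => (continuous_apply i).pow 2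

lemma continuous_dot (c : Fin 3 → ℝ) : Continuous fun y : Fin 3 → ℝ => ∑ i, c i * y i :=
  continuous_finset_sum _ fun i _ => continuous_const.mul (continuous_apply i)

lemma denom_ne {c : Fin 3 → ℝ} (hc : 4 ≤ ∑ i, (c i)^2) {y : Fin 3 → ℝ} (hy : y ∈ latBox) :
    (∑ i, (c i + y i)^2) ≠ 0 := by
  intro h0
  have hterm : ∀ i ∈ Finset.univ, (c i + y i)^2 = 0 :=
    (Finset.sum_eq_zero_iff_of_nonneg (fun i _ => sq_nonneg _)).mp h0
  have hci : ∀ i, c i = - y i := by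
    intro i
    have := hterm i (Finset.mem_univ i)
    have := pow_eq_zero_iff (n := 2) (by norm_num) |>.mp this
    linarith
  have : (∑ i, (c i)^2) = ∑ i, (y i)^2 := by
    apply Finset.sum_congr rfl
    intro i _
    rw [hci i]
    ring
  have := sum_sq_latBox_le hy
  linarith

lemma sum_sq_expand (c y : Fin 3 → ℝ) :
    ∑ i, (c i + y i)^2 = (∑ i, (c i)^2) + (∑ i, (y i)^2) + 2*(∑ i, c i * y i) := by
  rw [Fin.sum_univ_three, Fin.sum_univ_three, Fin.sum_univ_three, Fin.sum_univ_three]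
  ring

lemma sum_sq_expand' (c y : Fin 3 → ℝ) :
    ∑ i, (c i + (-y) i)^2 = (∑ i, (c i)^2) + (∑ i, (y i)^2) - 2*(∑ i, c i * y i) := by
  simp only [Pi.neg_apply]
  rw [Fin.sum_univ_three, Fin.sum_univ_three, Fin.sum_univ_three, Fin.sum_univ_three]
  ring

lemma key_cube (c : Fin 3 → ℝ) (hc : 4 ≤ ∑ i, (c i)^2) :
    1/(∑ i, (c i)^2)^2 ≤ ∫ y in latBox, 1/(∑ i, (c i + y i)^2)^2 := by
  set D : ℝ := ∑ i, (c i)^2 with hD_def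
  have hD0 : (0:ℝ) < D := by linarith
  set F : (Fin 3 → ℝ) → ℝ := fun y => 1/(∑ i, (c i + y i)^2)^2 with hF_def
  set G : (Fin 3 → ℝ) → ℝ := fun y =>
    1/D^2 - 2/D^3 * (∑ i, (y i)^2) + 12/(D+3/4)^4 * (∑ i, c i * y i)^2 with hG_def
  -- pointwise inequality
  have ptw : ∀ y ∈ latBox, 2 * G y ≤ F y + F (-y) := by
    intro y hy
    have hw0 : (0:ℝ) ≤ ∑ i, (y i)^2 := Finset.sum_nonneg fun i _ => sq_nonneg _
    have hw : (∑ i, (y i)^2) ≤ 3/4 := sum_sq_latBox_le hy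
    have hcs := Finset.sum_mul_sq_le_sq_mul_sq Finset.univ c y
    have hu : (2*(∑ i, c i * y i))^2 ≤ 4*D*(∑ i, (y i)^2) := by nlinarith
    have halg := alg_ineq hc hw0 hw hu
    have hF1 : F y = 1/(D + (∑ i, (y i)^2) + 2*(∑ i, c i * y i))^2 := by
      rw [hF_def]
      simp only
      rw [sum_sq_expand c y]
    have hF2 : F (-y) = 1/(D + (∑ i, (y i)^2) - 2*(∑ i, c i * y i))^2 := by
      rw [hF_def]
      simp only
      rw [sum_sq_expand' c y]
    rw [hF1, hF2, hG_def]
    simp only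
    have e : 2 * (1/D^2 - 2/D^3 * (∑ i, (y i)^2) + 12/(D+3/4)^4 * (∑ i, c i * y i)^2)
        = 2/D^2 - 4*(∑ i, (y i)^2)/D^3 + 6*(2*(∑ i, c i * y i))^2/(D+3/4)^4 := by
      ring
    linarith [halg, e]
  -- integrability
  have hFc : ContinuousOn F latBox := by
    apply ContinuousOn.div continuousOn_const ((continuous_sumsq c).pow 2).continuousOn
    intro y hy
    exact pow_ne_zero 2 (denom_ne hc hy)
  have hFnegc : ContinuousOn (fun y => F (-y)) latBox := by
    apply hFc.comp continuous_neg.continuousOn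
    intro y hy
    exact neg_mem_latBox hy
  have hGc : Continuous G := by
    apply Continuous.add
    · exact continuous_const.sub (continuous_const.mul continuous_sumsq0)
    · exact continuous_const.mul ((continuous_dot c).pow 2)
  have hIF : IntegrableOn F latBox := hFc.integrableOn_compact latBox_compact
  have hIFneg : IntegrableOn (fun y => F (-y)) latBox := hFnegc.integrableOn_compact latBox_compact
  have hIG : IntegrableOn G latBox := hGc.continuousOn.integrableOn_compact latBox_compact
  -- symmetrization
  have hnegbox : (Neg.neg ⁻¹' latBox : Set (Fin 3 → ℝ)) = latBox := by
    ext y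
    constructor
    · intro hy
      simpa using neg_mem_latBox (Set.mem_preimage.mp hy)
    · intro hy
      exact Set.mem_preimage.mpr (neg_mem_latBox hy)
  have hnegint : ∫ y in latBox, F (-y) = ∫ y in latBox, F y := by
    have mp := Measure.measurePreserving_neg (volume : Measure (Fin 3 → ℝ))
    have emb : MeasurableEmbedding (Neg.neg : (Fin 3 → ℝ) → (Fin 3 → ℝ)) :=
      (Homeomorph.neg (Fin 3 → ℝ)).measurableEmbedding
    have := mp.setIntegral_preimage_emb emb F latBox
    rw [hnegbox] at this
    exact this
  -- integrate the pointwise inequality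
  have hmono : ∫ y in latBox, 2 * G y ≤ ∫ y in latBox, (F y + F (-y)) :=
    setIntegral_mono_on (hIG.const_mul 2) (hIF.add hIFneg) latBox_meas ptw
  have hsplit : ∫ y in latBox, (F y + F (-y)) = 2 * ∫ y in latBox, F y := by
    rw [integral_add hIF hIFneg, hnegint]
    ring
  have h2G : ∫ y in latBox, 2 * G y = 2 * ∫ y in latBox, G y := integral_const_mul 2 G
  -- compute ∫ G
  have hI2 : ∫ y in latBox, (∑ i, (y i)^2) = 1/4 := by
    rw [integral_finset_sum]
    · have heach : ∀ i : Fin 3, ∫ y in latBox, (y i)^2 = 1/12 := by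
        intro i
        have h := latBox_integral_mul i i
        rw [if_pos rfl] at h
        rw [← h]
        apply setIntegral_congr_fun latBox_meas
        intro y _
        ring
      rw [Fin.sum_univ_three, heach 0, heach 1, heach 2]
      norm_num
    · intro i _
      exact (((continuous_apply i).pow 2).continuousOn).integrableOn_compact latBox_compact
  have hI3 : ∫ y in latBox, (∑ i, c i * y i)^2 = D/12 := by
    have expand : ∀ y : Fin 3 → ℝ,
        (∑ i, c i * y i)^2 = ∑ i, ∑ j, (c i * c j) * (y i * y j) := by
      intro y
      rw [sq, Finset.sum_mul_sum]
      apply Finset.sum_congr rfl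
      intro i _
      apply Finset.sum_congr rfl
      intro j _
      ring
    simp_rw [expand]
    rw [integral_finset_sum]
    · have heach : ∀ i : Fin 3, ∫ y in latBox, (∑ j, (c i * c j) * (y i * y j))
          = c i * c i * (1/12) := by
        intro i
        rw [integral_finset_sum]
        · have hin : ∀ j : Fin 3, ∫ y in latBox, (c i * c j) * (y i * y j)
              = (c i * c j) * (if i = j then (1/12:ℝ) else 0) := by
            intro j
            rw [integral_const_mul, latBox_integral_mul i j]
          simp_rw [hin]
          simp only [mul_ite, mul_zero]
          rw [Finset.sum_ite_eq]
          simp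
        · intro j _
          exact ((continuous_const.mul
            ((continuous_apply i).mul (continuous_apply j))).continuousOn).integrableOn_compact
            latBox_compact
      simp_rw [heach]
      rw [← Finset.sum_mul]
      have : (∑ i, c i * c i) = D := by
        rw [hD_def]
        apply Finset.sum_congr rfl
        intro i _
        ring
      rw [this]
      ring
    · intro i _
      apply (Continuous.continuousOn ?_).integrableOn_compact latBox_compact
      exact continuous_finset_sum _ fun j _ =>
        continuous_const.mul ((continuous_apply i).mul (continuous_apply j))
  have hIGa : IntegrableOn (fun y : Fin 3 → ℝ => 2/D^3 * (∑ i, (y i)^2)) latBox :=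
    ((continuous_const.mul continuous_sumsq0).continuousOn).integrableOn_compact latBox_compact
  have hIGb : IntegrableOn
      (fun y : Fin 3 → ℝ => 12/(D+3/4)^4 * (∑ i, c i * y i)^2) latBox :=
    ((continuous_const.mul ((continuous_dot c).pow 2)).continuousOn).integrableOn_compact
      latBox_compact
  have hIGc : IntegrableOn (fun _ : Fin 3 → ℝ => 1/D^2) latBox :=
    integrableOn_const (by rw [volume_latBox]; exact ENNReal.one_ne_top)
  have hIGd : IntegrableOn
      (fun y : Fin 3 → ℝ => 1/D^2 - 2/D^3 * (∑ i, (y i)^2)) latBox := hIGc.sub hIGa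
  have hGint : ∫ y in latBox, G y = 1/D^2 - 2/D^3 * (1/4) + 12/(D+3/4)^4 * (D/12) := by
    rw [hG_def]
    simp only
    rw [integral_add hIGd hIGb, integral_sub hIGc hIGa,
      integral_const_mul, integral_const_mul, hI2, hI3, setIntegral_const, measureReal_def, volume_latBox]
    simp
  -- conclude
  have hfin := final_ineq hc
  have e1 : 2/D^3 * (1/4) = 1/(2*D^3) := by
    field_simp
    ring
  have e2 : 12/(D+3/4)^4 * (D/12) = D/(D+3/4)^4 := by
    have hne : (D+3/4)^4 ≠ 0 := by positivity
    field_simp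
  have hGge : 1/D^2 ≤ ∫ y in latBox, G y := by
    rw [hGint, e1, e2]
    linarith
  have : ∫ y in latBox, G y ≤ ∫ y in latBox, F y := by
    have := hmono
    rw [h2G, hsplit] at this
    linarith
  calc 1/D^2 ≤ ∫ y in latBox, G y := hGge
    _ ≤ ∫ y in latBox, F y := this

end KeyCube

section Transfer

def latCube (k : Fin 3 → ℤ) : Set (EuclideanSpace ℝ (Fin 3)) :=
  {x | ∀ i, |x i - (k i : ℝ)| ≤ 1/2}

lemma measurable_eval3 (i : Fin 3) : Measurable fun x : EuclideanSpace ℝ (Fin 3) => x i :=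
  (measurable_pi_apply i).comp (MeasurableEquiv.toLp 2 (Fin 3 → ℝ)).symm.measurable

lemma latCube_meas (k : Fin 3 → ℤ) : MeasurableSet (latCube k) := by
  have : latCube k = ⋂ i, (fun x : EuclideanSpace ℝ (Fin 3) => x i) ⁻¹'
      (Set.Icc ((k i : ℝ) - 1/2) ((k i : ℝ) + 1/2)) := by
    ext x
    simp [latCube, abs_le, Set.mem_iInter, Set.mem_Icc]
    constructor
    · intro h i; have := h i; constructor <;> linarith [(this.1 : _), (this.2 : _)]
    · intro h i; have := h i; constructor <;> linarith [(this.1 : _), (this.2 : _)]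
  rw [this]
  exact MeasurableSet.iInter fun i => (measurable_eval3 i) measurableSet_Icc

lemma norm_pow_four (x : EuclideanSpace ℝ (Fin 3)) : ‖x‖^4 = (∑ i, (x i)^2)^2 := by
  have h := EuclideanSpace.norm_eq x
  have hS : (0:ℝ) ≤ ∑ i, (x i)^2 := Finset.sum_nonneg fun i _ => sq_nonneg _
  have h2 : ∑ i, ‖x i‖^2 = ∑ i, (x i)^2 := by
    apply Finset.sum_congr rfl
    intro i _
    rw [Real.norm_eq_abs, sq_abs]
  rw [h, h2]
  rw [show (4:ℕ) = 2*2 from rfl, pow_mul, Real.sq_sqrt hS]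

lemma latCube_integral (k : Fin 3 → ℤ)
    (hk : 4 ≤ ∑ i, ((k i : ℝ))^2) :
    1/‖(show EuclideanSpace ℝ (Fin 3) from WithLp.toLp 2 (fun i => (k i : ℝ)))‖^4
      ≤ ∫ x in latCube k, 1/‖x‖^4 := by
  set c : Fin 3 → ℝ := fun i => (k i : ℝ) with hc_def
  set Lk : EuclideanSpace ℝ (Fin 3) := (show EuclideanSpace ℝ (Fin 3) from WithLp.toLp 2 (fun i => (k i : ℝ)))
    with hLk_def
  have hLki : ∀ i, Lk i = c i := fun i => rfl
  set cube0 : Set (EuclideanSpace ℝ (Fin 3)) := {x | ∀ i, |x i| ≤ 1/2} with hcube0_def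
  -- translation
  have hT : MeasurePreserving (fun x : EuclideanSpace ℝ (Fin 3) => Lk + x) volume volume :=
    measurePreserving_add_left volume Lk
  have hTemb : MeasurableEmbedding (fun x : EuclideanSpace ℝ (Fin 3) => Lk + x) :=
    (MeasurableEquiv.addLeft Lk).measurableEmbedding
  have hpre1 : (fun x : EuclideanSpace ℝ (Fin 3) => Lk + x) ⁻¹' (latCube k) = cube0 := by
    ext x
    simp only [Set.mem_preimage, latCube, Set.mem_setOf_eq, hcube0_def]
    constructor
    · intro h i
      have := h i
      rwa [PiLp.add_apply, hLki i, add_sub_cancel_left] at this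
    · intro h i
      rw [PiLp.add_apply, hLki i, add_sub_cancel_left]
      exact h i
  have e1 : ∫ x in latCube k, 1/‖x‖^4 = ∫ x in cube0, 1/‖Lk + x‖^4 := by
    rw [← hT.setIntegral_preimage_emb hTemb (fun x => 1/‖x‖^4) (latCube k), hpre1]
  -- equivalence with pi space
  have hφ : MeasurePreserving ((MeasurableEquiv.toLp 2 (Fin 3 → ℝ)))
      (volume : Measure (Fin 3 → ℝ)) (volume : Measure (EuclideanSpace ℝ (Fin 3))) :=
    (EuclideanSpace.volume_preserving_symm_measurableEquiv_toLp (Fin 3)).symm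
  have hψi : ∀ (y : Fin 3 → ℝ) i, ((MeasurableEquiv.toLp 2 (Fin 3 → ℝ)) y) i = y i :=
    fun y i => rfl
  have hpre2 : ((MeasurableEquiv.toLp 2 (Fin 3 → ℝ))) ⁻¹' cube0 = latBox := by
    ext y
    simp only [Set.mem_preimage, hcube0_def, Set.mem_setOf_eq, mem_latBox_iff]
    constructor
    · intro h i; have := h i; rwa [hψi] at this
    · intro h i; rw [hψi]; exact h i
  have e2 : ∫ x in cube0, 1/‖Lk + x‖^4
      = ∫ y in latBox, 1/‖Lk + (MeasurableEquiv.toLp 2 (Fin 3 → ℝ)) y‖^4 := by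
    rw [← hφ.setIntegral_preimage_emb
      (MeasurableEquiv.toLp 2 (Fin 3 → ℝ)).measurableEmbedding
      (fun x => 1/‖Lk + x‖^4) cube0, hpre2]
  have e3 : ∀ y : Fin 3 → ℝ,
      1/‖Lk + (MeasurableEquiv.toLp 2 (Fin 3 → ℝ)) y‖^4
        = 1/(∑ i, (c i + y i)^2)^2 := by
    intro y
    rw [norm_pow_four]
    have happ : ∀ i, (Lk + (MeasurableEquiv.toLp 2 (Fin 3 → ℝ)) y) i = c i + y i :=
      fun i => by rw [PiLp.add_apply, hLki i, hψi]
    have hsum : (∑ i, ((Lk + (MeasurableEquiv.toLp 2 (Fin 3 → ℝ)) y) i)^2)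
        = ∑ i, (c i + y i)^2 := Finset.sum_congr rfl fun i _ => by rw [happ i]
    rw [hsum]
  have e4 : ‖Lk‖^4 = (∑ i, (c i)^2)^2 := by
    rw [norm_pow_four]
  rw [e1, e2, e4]
  simp_rw [e3]
  exact key_cube c hk

end Transfer

section Geom

lemma hyperplane_null (i : Fin 3) (r : ℝ) :
    volume {x : EuclideanSpace ℝ (Fin 3) | x i = r} = 0 := by
  have hmeas : MeasurableSet {x : EuclideanSpace ℝ (Fin 3) | x i = r} :=
    (measurable_eval3 i) (measurableSet_singleton r)
  have hφ : MeasurePreserving ((MeasurableEquiv.toLp 2 (Fin 3 → ℝ)))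
      (volume : Measure (Fin 3 → ℝ)) (volume : Measure (EuclideanSpace ℝ (Fin 3))) :=
    (EuclideanSpace.volume_preserving_symm_measurableEquiv_toLp (Fin 3)).symm
  rw [← hφ.measure_preimage hmeas.nullMeasurableSet]
  have : ((MeasurableEquiv.toLp 2 (Fin 3 → ℝ))) ⁻¹'
      {x : EuclideanSpace ℝ (Fin 3) | x i = r} = {y : Fin 3 → ℝ | y i = r} := rfl
  rw [this, volume_pi]
  exact Measure.pi_hyperplane (fun _ => (volume : Measure ℝ)) i r

lemma latCube_inter_null {k l : Fin 3 → ℤ} (h : k ≠ l) :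
    volume (latCube k ∩ latCube l) = 0 := by
  obtain ⟨i, hi⟩ := Function.ne_iff.mp h
  have hsub : latCube k ∩ latCube l ⊆
      {x : EuclideanSpace ℝ (Fin 3) | x i = ((k i : ℝ) + (l i : ℝ))/2} := by
    rintro x ⟨h1, h2⟩
    have ha := abs_le.mp (h1 i)
    have hb := abs_le.mp (h2 i)
    have ht : (1:ℝ) ≤ |((k i - l i : ℤ) : ℝ)| := by
      exact_mod_cast Int.one_le_abs (sub_ne_zero.mpr hi)
    push_cast at ht
    rcases le_abs.mp ht with hcase | hcase
    · simp only [Set.mem_setOf_eq]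
      linarith [ha.1, ha.2, hb.1, hb.2]
    · simp only [Set.mem_setOf_eq]
      linarith [ha.1, ha.2, hb.1, hb.2]
  exact measure_mono_null hsub (hyperplane_null i _)

lemma latCube_subset_region {k : Fin 3 → ℤ} {R : ℝ}
    (hk : R ≤ ‖(show EuclideanSpace ℝ (Fin 3) from WithLp.toLp 2 (fun i => (k i : ℝ)))‖) :
    latCube k ⊆ {x : EuclideanSpace ℝ (Fin 3) | R - Real.sqrt 3 ≤ ‖x‖} := by
  intro x hx
  set Lk : EuclideanSpace ℝ (Fin 3) := (show EuclideanSpace ℝ (Fin 3) from WithLp.toLp 2 (fun i => (k i : ℝ)))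
  have hdiff : ‖Lk - x‖ ≤ Real.sqrt 3 := by
    have h4 : ‖Lk - x‖^4 = (∑ i, ((Lk - x) i)^2)^2 := norm_pow_four _
    have happ : ∀ i, (Lk - x) i = (k i : ℝ) - x i := fun i => by
      rw [PiLp.sub_apply]
    have hterm : ∀ i, ((Lk - x) i)^2 ≤ 1/4 := by
      intro i
      rw [happ i]
      have := hx i
      have h5 : |x i - (k i : ℝ)| ≤ 1/2 := this
      nlinarith [abs_nonneg (x i - (k i:ℝ)), sq_abs (x i - (k i:ℝ))]
    have hsum : (∑ i, ((Lk - x) i)^2) ≤ 3 := by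
      rw [Fin.sum_univ_three]
      linarith [hterm 0, hterm 1, hterm 2]
    have hsum0 : (0:ℝ) ≤ ∑ i, ((Lk - x) i)^2 := Finset.sum_nonneg fun i _ => sq_nonneg _
    nlinarith [norm_nonneg (Lk - x), Real.sq_sqrt (by norm_num : (3:ℝ) ≥ 0),
      Real.sqrt_nonneg 3, sq_nonneg (‖Lk - x‖^2 - 3)]
  have htri : ‖Lk‖ - ‖x‖ ≤ ‖Lk - x‖ := norm_sub_norm_le Lk x
  simp only [Set.mem_setOf_eq]
  linarith

end Geom

section Region

lemma region_meas (r : ℝ) : MeasurableSet {x : EuclideanSpace ℝ (Fin 3) | r ≤ ‖x‖} :=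
  (isClosed_le continuous_const continuous_norm).measurableSet

lemma integrableOn_inv_norm_four {r : ℝ} (hr : 0 < r) :
    IntegrableOn (fun x : EuclideanSpace ℝ (Fin 3) => 1/‖x‖^4)
      {x : EuclideanSpace ℝ (Fin 3) | r ≤ ‖x‖} := by
  have hfin : ((Module.finrank ℝ (EuclideanSpace ℝ (Fin 3)) : ℝ)) < 4 := by
    rw [finrank_euclideanSpace_fin]; norm_num
  have hint : Integrable (fun x : EuclideanSpace ℝ (Fin 3) => (1 + ‖x‖) ^ (-(4:ℝ))) volume :=
    integrable_one_add_norm hfin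
  have hint2 : Integrable
      (fun x : EuclideanSpace ℝ (Fin 3) => (1+1/r)^4 * (1 + ‖x‖) ^ (-(4:ℝ))) volume :=
    hint.const_mul _
  refine Integrable.mono' hint2.restrict ?_ ?_
  · exact ((measurable_const.div ((measurable_norm).pow_const 4)).aestronglyMeasurable)
  · refine (MeasureTheory.ae_restrict_mem (region_meas r)).mono ?_
    intro x hx
    simp only [Set.mem_setOf_eq] at hx
    have hn : 0 < ‖x‖ := lt_of_lt_of_le hr hx
    have h1 : (0:ℝ) < 1 + ‖x‖ := by linarith
    have hpow : (1 + ‖x‖) ^ (-(4:ℝ)) = 1/(1 + ‖x‖)^4 := by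
      rw [Real.rpow_neg h1.le, one_div, show (4:ℝ) = ((4:ℕ):ℝ) by norm_num,
        Real.rpow_natCast]
    have hcmp : (1 + ‖x‖)^4 ≤ ((1+1/r)*‖x‖)^4 := by
      apply pow_le_pow_left₀ h1.le
      have h3 : 1 ≤ ‖x‖/r := (one_le_div hr).mpr hx
      have h4 : (1+1/r)*‖x‖ = ‖x‖ + ‖x‖/r := by field_simp
      linarith
    have hcmp' : (1+‖x‖)^4 ≤ (1+1/r)^4 * ‖x‖^4 := by
      rw [mul_pow] at hcmp
      exact hcmp
    have hx4 : (0:ℝ) < ‖x‖^4 := by positivity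
    have h14 : (0:ℝ) < (1+‖x‖)^4 := by positivity
    rw [hpow, Real.norm_eq_abs, abs_of_nonneg (by positivity : (0:ℝ) ≤ 1/‖x‖^4)]
    calc 1/‖x‖^4 ≤ (1+1/r)^4/(1+‖x‖)^4 := by
          rw [div_le_div_iff₀ hx4 h14]
          linarith
      _ = (1+1/r)^4 * (1/(1+‖x‖)^4) := by ring

end Region

section Polar

lemma gamma_five_half : Real.Gamma ((3:ℝ)/2 + 1) = 3/4 * Real.sqrt π := by
  rw [Real.Gamma_add_one (by norm_num)]
  have h32 : (3:ℝ)/2 = 1/2 + 1 := by norm_num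
  rw [h32, Real.Gamma_add_one (by norm_num), Real.Gamma_one_half_eq]
  ring

lemma volume_ball_three : (volume (Metric.ball (0 : EuclideanSpace ℝ (Fin 3)) 1)).toReal
    = 4/3 * π := by
  rw [EuclideanSpace.volume_ball]
  simp only [Fintype.card_fin]
  rw [ENNReal.toReal_mul, ENNReal.toReal_pow, ENNReal.toReal_ofReal (by norm_num : (0:ℝ) ≤ 1)]
  rw [ENNReal.toReal_ofReal (by positivity)]
  have h3 : ((3:ℕ):ℝ)/2 + 1 = (3:ℝ)/2 + 1 := by norm_num
  rw [h3, gamma_five_half]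
  have hs : Real.sqrt π > 0 := Real.sqrt_pos.mpr pi_pos
  have hcube : Real.sqrt π ^ 3 = π * Real.sqrt π := by
    rw [pow_succ, Real.sq_sqrt pi_pos.le]
  rw [hcube]
  field_simp

lemma integral_inv_norm_four {r : ℝ} (hr : 0 < r) :
    ∫ x in {x : EuclideanSpace ℝ (Fin 3) | r ≤ ‖x‖}, 1/‖x‖^4 = 4 * π / r := by
  set f : ℝ → ℝ := (Set.Ici r).indicator (fun t => 1/t^4) with hf_def
  have h1 : ∫ x in {x : EuclideanSpace ℝ (Fin 3) | r ≤ ‖x‖}, 1/‖x‖^4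
      = ∫ x : EuclideanSpace ℝ (Fin 3), f ‖x‖ := by
    rw [← MeasureTheory.integral_indicator (region_meas r)]
    apply MeasureTheory.integral_congr_ae
    apply Filter.Eventually.of_forall
    intro x
    rw [hf_def]
    simp only [Set.indicator_apply, Set.mem_setOf_eq, Set.mem_Ici]
  have h2 := MeasureTheory.integral_fun_norm_addHaar
    (volume : Measure (EuclideanSpace ℝ (Fin 3))) f
  rw [finrank_euclideanSpace_fin] at h2
  have hIoi : ∫ y in Set.Ioi (0:ℝ), y ^ (3-1) • f y = 1/r := by
    have hptw : ∀ y : ℝ, y^(3-1) • f y = (Set.Ici r).indicator (fun t => t^2 * (1/t^4)) y := by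
      intro y
      rw [hf_def]
      by_cases hy : y ∈ Set.Ici r
      · rw [Set.indicator_of_mem hy, Set.indicator_of_mem hy, smul_eq_mul]
      · rw [Set.indicator_of_notMem hy, Set.indicator_of_notMem hy, smul_eq_mul, mul_zero]
    simp_rw [hptw]
    rw [MeasureTheory.integral_indicator measurableSet_Ici,
      Measure.restrict_restrict measurableSet_Ici]
    have hint : Set.Ici r ∩ Set.Ioi 0 = Set.Ici r :=
      Set.inter_eq_left.mpr (fun y hy => lt_of_lt_of_le hr hy)
    rw [hint, MeasureTheory.integral_Ici_eq_integral_Ioi]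
    have hcong : Set.EqOn (fun y : ℝ => y^2*(1/y^4)) (fun y : ℝ => y ^ (-(2:ℝ))) (Set.Ioi r) := by
      intro y hy
      have hy0 : 0 < y := lt_trans hr hy
      simp only
      rw [Real.rpow_neg hy0.le, show (2:ℝ) = ((2:ℕ):ℝ) by norm_num, Real.rpow_natCast]
      field_simp
    rw [MeasureTheory.setIntegral_congr_fun measurableSet_Ioi hcong,
      integral_Ioi_rpow_of_lt (by norm_num : (-2:ℝ) < -1) hr]
    rw [show (-2:ℝ) + 1 = -1 by norm_num, Real.rpow_neg_one]
    field_simp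
  rw [h1, h2, hIoi, measureReal_def, volume_ball_three]
  rw [nsmul_eq_mul, smul_eq_mul]
  push_cast
  field_simp

end Polar

lemma norm_sq_eq (x : EuclideanSpace ℝ (Fin 3)) : ‖x‖^2 = ∑ i, (x i)^2 := by
  have h := EuclideanSpace.norm_eq x
  have hS : (0:ℝ) ≤ ∑ i, (x i)^2 := Finset.sum_nonneg fun i _ => sq_nonneg _
  have h2 : ∑ i, ‖x i‖^2 = ∑ i, (x i)^2 := by
    apply Finset.sum_congr rfl
    intro i _
    rw [Real.norm_eq_abs, sq_abs]
  rw [h, h2, Real.sq_sqrt hS]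

theorem lattice_sum_inv_norm_pow_four_le (m : ℕ) (hm : 2*Real.sqrt 3 < (m:ℝ)) :
    ((∑' k : {k : Fin 3 → ℤ //
        (m:ℝ)/2 ≤ ‖(show EuclideanSpace ℝ (Fin 3) from WithLp.toLp 2 (fun i => ((k : Fin 3 → ℤ) i : ℝ)))‖},
        1/‖(show EuclideanSpace ℝ (Fin 3) from WithLp.toLp 2 (fun i => ((k : Fin 3 → ℤ) i : ℝ)))‖^4)
      ≤ ∫ x in {x : EuclideanSpace ℝ (Fin 3) | (m:ℝ)/2 - Real.sqrt 3 ≤ ‖x‖}, 1/‖x‖^4) ∧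
    ((∫ x in {x : EuclideanSpace ℝ (Fin 3) | (m:ℝ)/2 - Real.sqrt 3 ≤ ‖x‖}, 1/‖x‖^4)
      = 8*π/((m:ℝ) - 2*Real.sqrt 3)) := by
  have hsq3 : Real.sqrt 3 ^ 2 = 3 := Real.sq_sqrt (by norm_num)
  have hs3pos : 0 < Real.sqrt 3 := Real.sqrt_pos.mpr (by norm_num)
  have hs3le : Real.sqrt 3 ≤ 2 := by nlinarith
  have hm4 : (4:ℝ) ≤ (m:ℝ) := by
    have h23 : (3:ℝ) < 2*Real.sqrt 3 := by nlinarith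
    have h3m : (3:ℝ) < (m:ℝ) := lt_trans h23 hm
    have h3m' : 3 < m := by exact_mod_cast h3m
    exact_mod_cast h3m'
  have hr : 0 < (m:ℝ)/2 - Real.sqrt 3 := by linarith
  constructor
  · -- the inequality
    have hterm : ∀ k : {k : Fin 3 → ℤ //
        (m:ℝ)/2 ≤ ‖(show EuclideanSpace ℝ (Fin 3) from WithLp.toLp 2 (fun i => ((k : Fin 3 → ℤ) i : ℝ)))‖},
        1/‖(show EuclideanSpace ℝ (Fin 3) from WithLp.toLp 2 (fun i => ((k : Fin 3 → ℤ) i : ℝ)))‖^4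
          ≤ ∫ x in latCube (k : Fin 3 → ℤ), 1/‖x‖^4 := by
      intro k
      apply latCube_integral
      have hk := k.2
      have hnsq := norm_sq_eq
        (show EuclideanSpace ℝ (Fin 3) from WithLp.toLp 2 (fun i => (((k : Fin 3 → ℤ)) i : ℝ)))
      have h2 : (2:ℝ) ≤ ‖(show EuclideanSpace ℝ (Fin 3) from
          WithLp.toLp 2 (fun i => (((k : Fin 3 → ℤ)) i : ℝ)))‖ := by
        calc (2:ℝ) ≤ (m:ℝ)/2 := by linarith
          _ ≤ _ := hk
      calc (4:ℝ) ≤ ‖(show EuclideanSpace ℝ (Fin 3) from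
            WithLp.toLp 2 (fun i => (((k : Fin 3 → ℤ)) i : ℝ)))‖^2 := by nlinarith
        _ = ∑ i, (((k : Fin 3 → ℤ) i : ℝ))^2 := hnsq
    have hmeasc : ∀ k : {k : Fin 3 → ℤ //
        (m:ℝ)/2 ≤ ‖(show EuclideanSpace ℝ (Fin 3) from WithLp.toLp 2 (fun i => ((k : Fin 3 → ℤ) i : ℝ)))‖},
        NullMeasurableSet (latCube (k : Fin 3 → ℤ)) volume :=
      fun k => (latCube_meas _).nullMeasurableSet
    have hdisj : Pairwise (Function.onFun (MeasureTheory.AEDisjoint volume) fun k : {k : Fin 3 → ℤ //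
        (m:ℝ)/2 ≤ ‖(show EuclideanSpace ℝ (Fin 3) from WithLp.toLp 2 (fun i => ((k : Fin 3 → ℤ) i : ℝ)))‖} =>
        latCube (k : Fin 3 → ℤ)) := by
      intro a b hab
      exact latCube_inter_null (fun h => hab (Subtype.ext h))
    have hsub : ∀ k : {k : Fin 3 → ℤ //
        (m:ℝ)/2 ≤ ‖(show EuclideanSpace ℝ (Fin 3) from WithLp.toLp 2 (fun i => ((k : Fin 3 → ℤ) i : ℝ)))‖},
        latCube (k : Fin 3 → ℤ)
          ⊆ {x : EuclideanSpace ℝ (Fin 3) | (m:ℝ)/2 - Real.sqrt 3 ≤ ‖x‖} :=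
      fun k => latCube_subset_region k.2
    have hIntU : IntegrableOn (fun x : EuclideanSpace ℝ (Fin 3) => 1/‖x‖^4)
        {x : EuclideanSpace ℝ (Fin 3) | (m:ℝ)/2 - Real.sqrt 3 ≤ ‖x‖} :=
      integrableOn_inv_norm_four hr
    have hIntUnion : IntegrableOn (fun x : EuclideanSpace ℝ (Fin 3) => 1/‖x‖^4)
        (⋃ k : {k : Fin 3 → ℤ //
          (m:ℝ)/2 ≤ ‖(show EuclideanSpace ℝ (Fin 3) from WithLp.toLp 2 (fun i => ((k : Fin 3 → ℤ) i : ℝ)))‖},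
          latCube (k : Fin 3 → ℤ)) :=
      hIntU.mono_set (Set.iUnion_subset hsub)
    have hHasSum := MeasureTheory.hasSum_integral_iUnion_ae hmeasc hdisj hIntUnion
    have hSummable : Summable (fun k : {k : Fin 3 → ℤ //
        (m:ℝ)/2 ≤ ‖(show EuclideanSpace ℝ (Fin 3) from WithLp.toLp 2 (fun i => ((k : Fin 3 → ℤ) i : ℝ)))‖} =>
        1/‖(show EuclideanSpace ℝ (Fin 3) from WithLp.toLp 2 (fun i => ((k : Fin 3 → ℤ) i : ℝ)))‖^4) :=
      Summable.of_nonneg_of_le (fun k => by positivity) hterm hHasSum.summable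
    calc (∑' k : {k : Fin 3 → ℤ //
        (m:ℝ)/2 ≤ ‖(show EuclideanSpace ℝ (Fin 3) from WithLp.toLp 2 (fun i => ((k : Fin 3 → ℤ) i : ℝ)))‖},
        1/‖(show EuclideanSpace ℝ (Fin 3) from WithLp.toLp 2 (fun i => ((k : Fin 3 → ℤ) i : ℝ)))‖^4)
        ≤ ∑' k : {k : Fin 3 → ℤ //
          (m:ℝ)/2 ≤ ‖(show EuclideanSpace ℝ (Fin 3) from WithLp.toLp 2 (fun i => ((k : Fin 3 → ℤ) i : ℝ)))‖},
          ∫ x in latCube (k : Fin 3 → ℤ), 1/‖x‖^4 :=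
        Summable.tsum_le_tsum hterm hSummable hHasSum.summable
      _ = ∫ x in (⋃ k : {k : Fin 3 → ℤ //
          (m:ℝ)/2 ≤ ‖(show EuclideanSpace ℝ (Fin 3) from WithLp.toLp 2 (fun i => ((k : Fin 3 → ℤ) i : ℝ)))‖},
          latCube (k : Fin 3 → ℤ)), 1/‖x‖^4 := hHasSum.tsum_eq
      _ ≤ ∫ x in {x : EuclideanSpace ℝ (Fin 3) | (m:ℝ)/2 - Real.sqrt 3 ≤ ‖x‖}, 1/‖x‖^4 :=
        MeasureTheory.setIntegral_mono_set hIntU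
          (Filter.Eventually.of_forall (fun x => by positivity))
          ((Set.iUnion_subset hsub).eventuallyLE)
  · -- the equality
    rw [integral_inv_norm_four hr]
    have hne1 : ((m:ℝ)/2 - Real.sqrt 3) ≠ 0 := ne_of_gt hr
    have hne2 : ((m:ℝ) - 2*Real.sqrt 3) ≠ 0 := by
      have : (0:ℝ) < (m:ℝ) - 2*Real.sqrt 3 := by linarith
      exact ne_of_gt this
    field_simp
    ring
end

section
/- For 0 < ℓ < 1/2, ∑_{n=1}^∞ ((2n+1)/2)·e^{-(2n+1)/(2ℓ)} ≤ e^{-1/(2ℓ)} ∫_0^∞ (x + 1/2) e^{-x/ℓ} dx = e^{-1/(2ℓ)}·(ℓ² + ℓ/2), and consequently (1/ℓ²)(e^{-1/(2ℓ)}/2 + 2∑_{n=1}^∞ ((2n+1)/2)e^{-(2n+1)/(2ℓ)}) ≤ e^{-1/(2ℓ)}(1+2ℓ+4ℓ²)/(2ℓ²). -/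
open Real MeasureTheory

-- auxiliary: the envelope function is antitone on [0,∞) when ℓ ≤ 1/2
lemma env_antitone {ℓ : ℝ} (hℓ : 0 < ℓ) (hℓ' : ℓ < 1/2) :
    AntitoneOn (fun x : ℝ => ((2*x+1)/2) * Real.exp (-(2*x+1)/(2*ℓ)))
      (Set.Ici (0:ℝ)) := by
  intro x hx y hy hxy
  simp only [Set.mem_Ici] at hx hy
  set u := x + 1/2 with hu
  set v := y + 1/2 with hv
  have hu0 : 0 < u := by simp only [hu]; linarith
  have hlu : ℓ ≤ u := by simp only [hu]; linarith
  have huv : u ≤ v := by simp only [hu, hv]; linarith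
  have key : v * Real.exp (-(v/ℓ)) ≤ u * Real.exp (-(u/ℓ)) := by
    have h1 : 1 + (v-u)/ℓ ≤ Real.exp ((v-u)/ℓ) := by
      have := Real.add_one_le_exp ((v-u)/ℓ); linarith
    have h2 : (v-u)/u ≤ (v-u)/ℓ :=
      div_le_div_of_nonneg_left (by linarith) hℓ hlu
    have h3 : v/u ≤ Real.exp ((v-u)/ℓ) := by
      have hvu : v/u = 1 + (v-u)/u := by field_simp; ring
      rw [hvu]; linarith
    have h4 : v ≤ u * Real.exp ((v-u)/ℓ) := by
      rw [div_le_iff₀ hu0] at h3; linarith [h3]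
    have h5 : Real.exp (-(v/ℓ)) * Real.exp ((v-u)/ℓ) = Real.exp (-(u/ℓ)) := by
      rw [← Real.exp_add]; congr 1; field_simp; ring
    calc v * Real.exp (-(v/ℓ)) ≤ (u * Real.exp ((v-u)/ℓ)) * Real.exp (-(v/ℓ)) :=
          mul_le_mul_of_nonneg_right h4 (Real.exp_pos _).le
      _ = u * (Real.exp (-(v/ℓ)) * Real.exp ((v-u)/ℓ)) := by ring
      _ = u * Real.exp (-(u/ℓ)) := by rw [h5]
  have e1 : (2*x+1)/2 = u := by rw [hu]; ring
  have e2 : (2*y+1)/2 = v := by rw [hv]; ring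
  have e3 : -(2*x+1)/(2*ℓ) = -(u/ℓ) := by rw [hu]; field_simp
  have e4 : -(2*y+1)/(2*ℓ) = -(v/ℓ) := by rw [hv]; field_simp
  simp only [e1, e2, e3, e4]
  exact key

theorem deriv_matern_series_integral_comparison (ℓ : ℝ) (hℓ : 0 < ℓ) (hℓ' : ℓ < 1/2) :
    ((∑' n : ℕ, ((2*((n:ℝ)+1)+1)/2) * Real.exp (-(2*((n:ℝ)+1)+1)/(2*ℓ))
        ≤ Real.exp (-1/(2*ℓ)) * ∫ x in Set.Ioi (0:ℝ), (x + 1/2) * Real.exp (-x/ℓ)) ∧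
      ((∫ x in Set.Ioi (0:ℝ), (x + 1/2) * Real.exp (-x/ℓ)) = ℓ^2 + ℓ/2)) ∧
    (1/ℓ^2) * (Real.exp (-1/(2*ℓ))/2
        + 2 * ∑' n : ℕ, ((2*((n:ℝ)+1)+1)/2) * Real.exp (-(2*((n:ℝ)+1)+1)/(2*ℓ)))
      ≤ Real.exp (-1/(2*ℓ)) * (1 + 2*ℓ + 4*ℓ^2) / (2*ℓ^2) := by
  have hr : (0:ℝ) < 1/ℓ := by positivity
  set f : ℝ → ℝ := fun x => ((2*x+1)/2) * Real.exp (-(2*x+1)/(2*ℓ)) with hfdef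
  -- f x = exp(-1/(2ℓ)) * (x+1/2) * exp(-x/ℓ)
  have hfeq : ∀ x : ℝ, f x = Real.exp (-1/(2*ℓ)) * ((x + 1/2) * Real.exp (-x/ℓ)) := by
    intro x
    simp only [hfdef]
    rw [show Real.exp (-1/(2*ℓ)) * ((x + 1/2) * Real.exp (-x/ℓ))
        = (x + 1/2) * (Real.exp (-1/(2*ℓ)) * Real.exp (-x/ℓ)) by ring,
      ← Real.exp_add]
    congr 1
    · ring
    · field_simp; ring
  -- integrability of x * exp(-x/ℓ) on Ioi 0
  have hint1 : IntegrableOn (fun x : ℝ => x * Real.exp (-x/ℓ)) (Set.Ioi 0) := by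
    have h := integrableOn_rpow_mul_exp_neg_mul_rpow (s := 1) (p := 1) (b := 1/ℓ)
      (by norm_num) zero_lt_one hr
    have heq : (fun x : ℝ => x ^ (1:ℝ) * Real.exp (-(1/ℓ) * x ^ (1:ℝ)))
        = fun x : ℝ => x * Real.exp (-x/ℓ) := by
      funext x
      rw [Real.rpow_one]
      congr 1
      field_simp
    rwa [heq] at h
  have hint2 : IntegrableOn (fun x : ℝ => Real.exp (-x/ℓ)) (Set.Ioi 0) := by
    have h := exp_neg_integrableOn_Ioi (a := 0) hr
    have heq : (fun x : ℝ => Real.exp (-(1/ℓ) * x)) = fun x : ℝ => Real.exp (-x/ℓ) := by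
      funext x
      congr 1
      field_simp
    rwa [heq] at h
  have hintg : IntegrableOn (fun x : ℝ => (x + 1/2) * Real.exp (-x/ℓ)) (Set.Ioi 0) := by
    have heq : (fun x : ℝ => (x + 1/2) * Real.exp (-x/ℓ))
        = fun x => x * Real.exp (-x/ℓ) + (1/2) * Real.exp (-x/ℓ) := by
      funext x; ring
    rw [heq]
    exact hint1.add (hint2.const_mul _)
  have hintf : IntegrableOn f (Set.Ioi 0) := by
    have : f = fun x => Real.exp (-1/(2*ℓ)) * ((x + 1/2) * Real.exp (-x/ℓ)) := funext hfeq
    rw [this]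
    exact hintg.const_mul _
  -- value of the integral
  have hIval : (∫ x in Set.Ioi (0:ℝ), (x + 1/2) * Real.exp (-x/ℓ)) = ℓ^2 + ℓ/2 := by
    have h1 : (∫ x in Set.Ioi (0:ℝ), x * Real.exp (-x/ℓ)) = ℓ^2 := by
      have h := Real.integral_rpow_mul_exp_neg_mul_Ioi (a := 2) (r := 1/ℓ)
        (by norm_num) hr
      rw [setIntegral_congr_fun measurableSet_Ioi
        (show Set.EqOn (fun x : ℝ => x * Real.exp (-x/ℓ))
          (fun t : ℝ => t ^ ((2:ℝ)-1) * Real.exp (-(1/ℓ * t))) (Set.Ioi 0) by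
            intro x hx
            simp only
            rw [show (2:ℝ)-1 = 1 by norm_num, Real.rpow_one]
            congr 1
            field_simp)]
      rw [h, Real.Gamma_two]
      rw [one_div_one_div]
      rw [show (2:ℝ) = ((2:ℕ):ℝ) by norm_num, Real.rpow_natCast]
      ring
    have h2 : (∫ x in Set.Ioi (0:ℝ), Real.exp (-x/ℓ)) = ℓ := by
      have h := Real.integral_rpow_mul_exp_neg_mul_Ioi (a := 1) (r := 1/ℓ)
        (by norm_num) hr
      rw [setIntegral_congr_fun measurableSet_Ioi
        (show Set.EqOn (fun x : ℝ => Real.exp (-x/ℓ))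
          (fun t : ℝ => t ^ ((1:ℝ)-1) * Real.exp (-(1/ℓ * t))) (Set.Ioi 0) by
            intro x hx
            simp only [sub_self, Real.rpow_zero, one_mul]
            congr 1
            field_simp)]
      rw [h, Real.Gamma_one, one_div_one_div, Real.rpow_one, mul_one]
    calc (∫ x in Set.Ioi (0:ℝ), (x + 1/2) * Real.exp (-x/ℓ))
        = ∫ x in Set.Ioi (0:ℝ), (x * Real.exp (-x/ℓ) + (1/2) * Real.exp (-x/ℓ)) := by
          congr 1; funext x; ring
      _ = (∫ x in Set.Ioi (0:ℝ), x * Real.exp (-x/ℓ))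
            + ∫ x in Set.Ioi (0:ℝ), (1/2) * Real.exp (-x/ℓ) :=
          integral_add hint1 (hint2.const_mul _)
      _ = ℓ^2 + (1/2) * ℓ := by rw [h1, integral_const_mul, h2]
      _ = ℓ^2 + ℓ/2 := by ring
  -- the series bound
  set I : ℝ := ∫ x in Set.Ioi (0:ℝ), f x with hI
  have hIval' : I = Real.exp (-1/(2*ℓ)) * ∫ x in Set.Ioi (0:ℝ), (x + 1/2) * Real.exp (-x/ℓ) := by
    rw [hI, ← integral_const_mul]
    exact setIntegral_congr_fun measurableSet_Ioi (fun x _ => hfeq x)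
  have hfnonneg : ∀ x : ℝ, 0 ≤ x → 0 ≤ f x := by
    intro x hx
    simp only [hfdef]
    positivity
  have hpartial : ∀ n : ℕ, ∑ i ∈ Finset.range n, f ((i:ℝ) + 1) ≤ I := by
    intro n
    have hanti : AntitoneOn f (Set.Icc (0:ℝ) (0 + n)) :=
      (env_antitone hℓ hℓ').mono (fun x hx => hx.1)
    have hsum := hanti.sum_le_integral
    have hle : (∫ x in (0:ℝ)..(0 + n), f x) ≤ I := by
      rw [intervalIntegral.integral_of_le (by positivity)]
      apply setIntegral_mono_set hintf
      · filter_upwards [ae_restrict_mem measurableSet_Ioi] with x hx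
        exact hfnonneg x (le_of_lt hx)
      · apply Filter.Eventually.of_forall
        intro x hx
        exact hx.1
    calc ∑ i ∈ Finset.range n, f ((i:ℝ) + 1)
        = ∑ i ∈ Finset.range n, f ((0:ℝ) + ((i:ℕ) + 1 : ℕ)) := by
          apply Finset.sum_congr rfl
          intro i _
          congr 1
          push_cast
          ring
      _ ≤ ∫ x in (0:ℝ)..(0 + n), f x := hsum
      _ ≤ I := hle
  have hterm_nonneg : ∀ n : ℕ, 0 ≤ f ((n:ℝ) + 1) := fun n => hfnonneg _ (by positivity)
  have hsummable : Summable (fun n : ℕ => f ((n:ℝ) + 1)) :=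
    summable_of_sum_range_le hterm_nonneg hpartial
  have htsum_le : (∑' n : ℕ, f ((n:ℝ) + 1)) ≤ I :=
    Summable.tsum_le_of_sum_range_le hsummable hpartial
  have hmain : (∑' n : ℕ, ((2*((n:ℝ)+1)+1)/2) * Real.exp (-(2*((n:ℝ)+1)+1)/(2*ℓ)))
      ≤ Real.exp (-1/(2*ℓ)) * ∫ x in Set.Ioi (0:ℝ), (x + 1/2) * Real.exp (-x/ℓ) := by
    rw [← hIval']
    exact htsum_le
  refine ⟨⟨hmain, hIval⟩, ?_⟩
  have hS : (∑' n : ℕ, ((2*((n:ℝ)+1)+1)/2) * Real.exp (-(2*((n:ℝ)+1)+1)/(2*ℓ)))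
      ≤ Real.exp (-1/(2*ℓ)) * (ℓ^2 + ℓ/2) := by
    rw [← hIval]
    exact hmain
  set S := ∑' n : ℕ, ((2*((n:ℝ)+1)+1)/2) * Real.exp (-(2*((n:ℝ)+1)+1)/(2*ℓ)) with hSdef
  have hE : 0 < Real.exp (-1/(2*ℓ)) := Real.exp_pos _
  have hgoal : (1/ℓ^2) * (Real.exp (-1/(2*ℓ))/2 + 2 * S)
      ≤ (1/ℓ^2) * (Real.exp (-1/(2*ℓ))/2 + 2 * (Real.exp (-1/(2*ℓ)) * (ℓ^2 + ℓ/2))) := by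
    apply mul_le_mul_of_nonneg_left _ (by positivity)
    linarith
  refine hgoal.trans (le_of_eq ?_)
  field_simp
  ring
end
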